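/- arXiv:2411.05250 — 8 statements merged into one kernel-verified Lean document; each statement's English description precedes it below -/
import Mathlib

section
/- Let X₁ → X₂ → ⋯ → Xₙ be composable morphisms f₁,…,f_{n-1} in an abelian category, with composite f = f_{n-1}∘⋯∘f₁, and let 0 = C₀ ⊆ C₁ ⊆ ⋯ ⊆ C_{n-1} = C be a chain of monomorphisms. If for each i, Ext¹(C_i/C_{i-1}, f_i) = 0 (i.e., the map Ext¹(C_i/C_{i-1}, X_i) → Ext¹(C_i/C_{i-1}, X_{i+1}) induced by f_i is zero), then Ext¹(C, f) = 0. -/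
open CategoryTheory Limits CategoryTheory.Abelian

universe w v u

/-- The composite `f_{n-1} ∘ ⋯ ∘ f₀ : X 0 ⟶ X n` of a chain of composable morphisms. -/
def chainComposite {C : Type u} [Category.{v} C] (X : ℕ → C) (f : ∀ i, X i ⟶ X (i + 1)) :
    ∀ n, X 0 ⟶ X n
  | 0 => 𝟙 (X 0)
  | n + 1 => chainComposite X f n ≫ f n

/-- If `f = fₙ ∘ ⋯ ∘ f₁` is a composite of composable morphisms and
`0 = C₀ ⊆ C₁ ⊆ ⋯ ⊆ Cₙ = C` is a chain of monomorphisms such that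
`Ext¹(Cᵢ₊₁/Cᵢ, fᵢ) = 0` for each `i`, then `Ext¹(C, f) = 0`. -/
theorem stmt0 {C : Type u} [Category.{v} C] [Abelian C] [HasExt.{w} C]
    (n : ℕ) (X : ℕ → C) (f : ∀ i, X i ⟶ X (i + 1))
    (Cc : ℕ → C) (ι : ∀ i, Cc i ⟶ Cc (i + 1)) [∀ i, Mono (ι i)]
    (h0 : IsZero (Cc 0))
    (hv : ∀ i, i < n → ∀ e : Ext (cokernel (ι i)) (X i) 1,
      e.comp (Ext.mk₀ (f i)) (add_zero 1) = 0) :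
    ∀ e : Ext (Cc n) (X 0) 1,
      e.comp (Ext.mk₀ (chainComposite X f n)) (add_zero 1) = 0 := by
  induction n with
  | zero =>
    intro e
    have he : e = 0 := by
      rw [← Ext.mk₀_id_comp e, h0.eq_of_src (𝟙 (Cc 0)) 0, Ext.mk₀_zero, Ext.zero_comp]
    rw [he, Ext.zero_comp]
  | succ n ih =>
    intro e
    have hS : (ShortComplex.mk (ι n) (cokernel.π (ι n)) (by simp)).ShortExact :=
      { exact := ShortComplex.exact_cokernel _ }
    have h2 : (Ext.mk₀ (ι n)).comp (e.comp (Ext.mk₀ (chainComposite X f n)) (add_zero 1))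
        (zero_add 1) = 0 := by
      rw [← Ext.comp_assoc _ _ _ (zero_add 1) (add_zero 1) (by omega)]
      exact ih (fun i hi => hv i (by omega)) ((Ext.mk₀ (ι n)).comp e (zero_add 1))
    obtain ⟨x₁, hx₁⟩ := Ext.contravariant_sequence_exact₂ hS (X n)
      (e.comp (Ext.mk₀ (chainComposite X f n)) (add_zero 1)) h2
    have : chainComposite X f (n + 1) = chainComposite X f n ≫ f n := rfl
    rw [this, ← Ext.mk₀_comp_mk₀,
      ← Ext.comp_assoc _ _ _ (add_zero 1) (add_zero 0) (by omega),
      ← hx₁,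
      Ext.comp_assoc _ _ _ (zero_add 1) (add_zero 1) (by omega),
      hv n (by omega) x₁, Ext.comp_zero]
end

section
/- Let f : X. → Y. be a morphism of split short exact sequences in an abelian category with chosen splittings (r_X, s_X) and (r_Y, s_Y), and let Δ(f) : X₋₁ → Y₁ be the associated connecting map. If Δ(f) extends along f₋₁, i.e., there exists Δ_Y : Y₋₁ → Y₁ with Δ(f) = Δ_Y ∘ f₋₁, then the adjusted splittings (r_X, s_X) on X. and (r_Y + Δ_Y ∘ p_Y, s_Y − i_Y ∘ Δ_Y) on Y. commute with f, i.e., f₁ ∘ r_X = (r_Y + Δ_Y ∘ p_Y) ∘ f₀ and f₀ ∘ s_X = (s_Y − i_Y ∘ Δ_Y) ∘ f₋₁. -/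
open CategoryTheory Limits

universe v u

/-- Downward adjustment of splittings: let `f = (f₁, f₀, fm) : X. ⟶ Y.` be a morphism of
split short exact sequences (encoded as short complexes `S`, `T`) with splittings
`(rX, sX)` and `(rY, sY)`, and let `Δf` be the associated connecting map (characterized by
`−Δf ∘ p_X = r_Y ∘ f₀ − f₁ ∘ r_X` and `i_Y ∘ Δf = s_Y ∘ fm − f₀ ∘ s_X`).  If `Δf`
extends along `fm`, i.e. `Δf = Δ_Y ∘ fm`, then the splittings `(rX, sX)` and
`(rY + Δ_Y ∘ p_Y, sY − i_Y ∘ Δ_Y)` commute with `f`. -/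
theorem stmt4 {C : Type u} [Category.{v} C] [Abelian C]
    (S T : ShortComplex C) (hS : S.ShortExact) (hT : T.ShortExact)
    (f₁ : S.X₁ ⟶ T.X₁) (f₀ : S.X₂ ⟶ T.X₂) (fm : S.X₃ ⟶ T.X₃)
    (hcomm₁ : f₁ ≫ T.f = S.f ≫ f₀) (hcomm₂ : f₀ ≫ T.g = S.g ≫ fm)
    (rX : S.X₂ ⟶ S.X₁) (sX : S.X₃ ⟶ S.X₂)
    (hrX : S.f ≫ rX = 𝟙 S.X₁) (hsX : sX ≫ S.g = 𝟙 S.X₃)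
    (hrsX : rX ≫ S.f + S.g ≫ sX = 𝟙 S.X₂)
    (rY : T.X₂ ⟶ T.X₁) (sY : T.X₃ ⟶ T.X₂)
    (hrY : T.f ≫ rY = 𝟙 T.X₁) (hsY : sY ≫ T.g = 𝟙 T.X₃)
    (hrsY : rY ≫ T.f + T.g ≫ sY = 𝟙 T.X₂)
    (Δf : S.X₃ ⟶ T.X₁)
    (hΔf₁ : -(S.g ≫ Δf) = f₀ ≫ rY - rX ≫ f₁)
    (hΔf₂ : Δf ≫ T.f = fm ≫ sY - sX ≫ f₀)
    (ΔY : T.X₃ ⟶ T.X₁) (hext : Δf = fm ≫ ΔY) :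
    rX ≫ f₁ = f₀ ≫ (rY + T.g ≫ ΔY) ∧ sX ≫ f₀ = fm ≫ (sY - ΔY ≫ T.f) := by
  constructor
  · have h : -(S.g ≫ (fm ≫ ΔY)) = f₀ ≫ rY - rX ≫ f₁ := hext ▸ hΔf₁
    rw [← Category.assoc, ← hcomm₂, Category.assoc] at h
    have h2 := neg_eq_iff_eq_neg.mp h
    rw [neg_sub] at h2
    rw [Preadditive.comp_add, h2]
    abel
  · have h : (fm ≫ ΔY) ≫ T.f = fm ≫ sY - sX ≫ f₀ := hext ▸ hΔf₂
    rw [Category.assoc] at h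
    rw [Preadditive.comp_sub, h]
    abel
end

section
/- Let g : Y. → Z. and f : X. → Y. be composable morphisms of split short exact sequences in an abelian category, with fixed splittings on X., Y., and Z.. Then the connecting maps satisfy the derivation rule Δ(g ∘ f) = Δ(g) ∘ f₋₁ + g₁ ∘ Δ(f). -/
open CategoryTheory Limits

universe v u

/-- Derivation rule for connecting maps: given composable morphisms
`f : X. ⟶ Y.` and `g : Y. ⟶ Z.` of split short exact sequences (encoded as short
complexes `S`, `T`, `U`) with fixed splittings, and connecting maps `Δf`, `Δg`, `Δgf`
characterized by the usual equations, one has `Δ(g∘f) = Δ(g) ∘ f₋₁ + g₁ ∘ Δ(f)`. -/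
theorem stmt5 {C : Type u} [Category.{v} C] [Abelian C]
    (S T U : ShortComplex C) (hS : S.ShortExact) (hT : T.ShortExact) (hU : U.ShortExact)
    (f₁ : S.X₁ ⟶ T.X₁) (f₀ : S.X₂ ⟶ T.X₂) (fm : S.X₃ ⟶ T.X₃)
    (hfcomm₁ : f₁ ≫ T.f = S.f ≫ f₀) (hfcomm₂ : f₀ ≫ T.g = S.g ≫ fm)
    (g₁ : T.X₁ ⟶ U.X₁) (g₀ : T.X₂ ⟶ U.X₂) (gm : T.X₃ ⟶ U.X₃)
    (hgcomm₁ : g₁ ≫ U.f = T.f ≫ g₀) (hgcomm₂ : g₀ ≫ U.g = T.g ≫ gm)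
    (rX : S.X₂ ⟶ S.X₁) (sX : S.X₃ ⟶ S.X₂)
    (hrX : S.f ≫ rX = 𝟙 S.X₁) (hsX : sX ≫ S.g = 𝟙 S.X₃)
    (hrsX : rX ≫ S.f + S.g ≫ sX = 𝟙 S.X₂)
    (rY : T.X₂ ⟶ T.X₁) (sY : T.X₃ ⟶ T.X₂)
    (hrY : T.f ≫ rY = 𝟙 T.X₁) (hsY : sY ≫ T.g = 𝟙 T.X₃)
    (hrsY : rY ≫ T.f + T.g ≫ sY = 𝟙 T.X₂)
    (rZ : U.X₂ ⟶ U.X₁) (sZ : U.X₃ ⟶ U.X₂)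
    (hrZ : U.f ≫ rZ = 𝟙 U.X₁) (hsZ : sZ ≫ U.g = 𝟙 U.X₃)
    (hrsZ : rZ ≫ U.f + U.g ≫ sZ = 𝟙 U.X₂)
    (Δf : S.X₃ ⟶ T.X₁)
    (hΔf₁ : -(S.g ≫ Δf) = f₀ ≫ rY - rX ≫ f₁)
    (hΔf₂ : Δf ≫ T.f = fm ≫ sY - sX ≫ f₀)
    (Δg : T.X₃ ⟶ U.X₁)
    (hΔg₁ : -(T.g ≫ Δg) = g₀ ≫ rZ - rY ≫ g₁)
    (hΔg₂ : Δg ≫ U.f = gm ≫ sZ - sY ≫ g₀)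
    (Δgf : S.X₃ ⟶ U.X₁)
    (hΔgf₁ : -(S.g ≫ Δgf) = (f₀ ≫ g₀) ≫ rZ - rX ≫ (f₁ ≫ g₁))
    (hΔgf₂ : Δgf ≫ U.f = (fm ≫ gm) ≫ sZ - sX ≫ (f₀ ≫ g₀)) :
    Δgf = fm ≫ Δg + Δf ≫ g₁ := by
  have := hU.mono_f
  rw [← cancel_mono U.f, hΔgf₂, Preadditive.add_comp,
    Category.assoc, Category.assoc, hΔg₂, Category.assoc, hgcomm₁, ← Category.assoc Δf, hΔf₂]
  simp [Preadditive.comp_sub]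
end

section
/- Let J be an ideal of morphisms in an additive category (closed under addition and under pre- and post-composition with arbitrary morphisms) in which the relevant colimits exist. For any two ordinals α and β, the product ideal J^{(α)} · J^{(β)} equals J^{(β+α)}, where J^{(λ)} denotes the λ-th inductive power of J. -/
open CategoryTheory Limits

universe w v u

namespace CategoryTheory

/-- The `λ`-th inductive power of an ideal `J` of morphisms: `g` belongs to `J^{(λ)}` iff
`g = h ∘ a⁰_λ` (up to an isomorphism identifying the source), where `a⁰_λ : A 0 ⟶ A λ` is
the transfinite composition of a continuous `λ`-system `(A α, a α β)` all of whose
successor maps `a α (α+1)` (for `α < λ`) lie in `J`; continuity means that at every limit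
ordinal `β ≤ λ`, the object `A β` together with the maps `a α β` (for `α < β`) is a colimit
of the preceding system. -/
def MorphismProperty.InductivePower {C : Type u} [Category.{v} C]
    (J : MorphismProperty C) (lam : Ordinal.{w}) : MorphismProperty C := fun X Y g =>
  ∃ (A : Ordinal.{w} → C) (a : ∀ α β : Ordinal.{w}, α ≤ β → (A α ⟶ A β)),
    (∀ α, a α α le_rfl = 𝟙 (A α)) ∧
    (∀ (α β γ : Ordinal.{w}) (h₁ : α ≤ β) (h₂ : β ≤ γ),
        a α β h₁ ≫ a β γ h₂ = a α γ (h₁.trans h₂)) ∧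
    (∀ α : Ordinal.{w}, α < lam → J (a α (α + 1) (le_self_add))) ∧
    (∀ β : Ordinal.{w}, β ≤ lam → Order.IsSuccLimit β →
      ∀ (W : C) (c : ∀ α : Ordinal.{w}, α < β → (A α ⟶ W)),
        (∀ (α α' : Ordinal.{w}) (h : α ≤ α') (h' : α' < β),
            a α α' h ≫ c α' h' = c α (lt_of_le_of_lt h h')) →
        ∃! t : A β ⟶ W, ∀ (α : Ordinal.{w}) (h : α < β), a α β h.le ≫ t = c α h) ∧
    ∃ (e : X ≅ A 0) (h : A lam ⟶ Y),
      g = e.hom ≫ a 0 lam (zero_le (a := lam)) ≫ h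

/-- The product `P · Q` of two ideals of morphisms: it consists of all composites
`i ∘ j` with `j ∈ Q` and `i ∈ P` composable. -/
def MorphismProperty.IdealProd {C : Type u} [Category.{v} C]
    (P Q : MorphismProperty C) : MorphismProperty C := fun X Z g =>
  ∃ (Y : C) (j : X ⟶ Y) (i : Y ⟶ Z), Q j ∧ P i ∧ g = j ≫ i

end CategoryTheory

namespace Stmt8Aux

open CategoryTheory

variable {C : Type u} [Category.{v} C]

theorem fam_eq {F : Ordinal.{w} → C} {W : C} {lam : Ordinal.{w}}
    (c : ∀ x : Ordinal.{w}, x < lam → (F x ⟶ W)) {x y : Ordinal.{w}} (h : x = y)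
    (hx : x < lam) (hy : y < lam) : eqToHom (congrArg F h) ≫ c y hy = c x hx := by
  subst h; simp

theorem chain_congr {F : Ordinal.{w} → C}
    (f : ∀ x y : Ordinal.{w}, x ≤ y → (F x ⟶ F y)) {x x' y y' : Ordinal.{w}}
    (hx : x = x') (hy : y = y') (h : x ≤ y) (h' : x' ≤ y') :
    f x y h = eqToHom (congrArg F hx) ≫ f x' y' h' ≫ eqToHom (congrArg F hy).symm := by
  subst hx; subst hy; simp

section Splice

variable (β : Ordinal.{w}) (B A : Ordinal.{w} → C)
variable (b : ∀ γ δ : Ordinal.{w}, γ ≤ δ → (B γ ⟶ B δ))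
variable (a : ∀ γ δ : Ordinal.{w}, γ ≤ δ → (A γ ⟶ A δ))
variable (k : B β ⟶ A 0)

set_option linter.unusedSectionVars false

/-- The spliced chain of objects. -/
noncomputable def D (γ : Ordinal.{w}) : C := if γ ≤ β then B γ else A (γ - β)

theorem D_left {γ : Ordinal.{w}} (h : γ ≤ β) : D β B A γ = B γ := if_pos h

theorem D_right {γ : Ordinal.{w}} (h : ¬ γ ≤ β) : D β B A γ = A (γ - β) := if_neg h

theorem sub_le_sub' {γ δ : Ordinal.{w}} (h : γ ≤ δ) (hδ : ¬ δ ≤ β) : γ - β ≤ δ - β :=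
  Ordinal.sub_le.mpr (by rwa [Ordinal.add_sub_cancel_of_le (le_of_not_ge hδ)])

/-- The spliced chain of maps. -/
noncomputable def dd (γ δ : Ordinal.{w}) (h : γ ≤ δ) : D β B A γ ⟶ D β B A δ :=
  if hδ : δ ≤ β then
    eqToHom (D_left β B A (h.trans hδ)) ≫ b γ δ h ≫ eqToHom (D_left β B A hδ).symm
  else if hγ : γ ≤ β then
    eqToHom (D_left β B A hγ) ≫ b γ β hγ ≫ k ≫ a 0 (δ - β) ((zero_le (a := _))) ≫
      eqToHom (D_right β B A hδ).symm
  else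
    eqToHom (D_right β B A hγ) ≫ a (γ - β) (δ - β) (sub_le_sub' β h hδ) ≫
      eqToHom (D_right β B A hδ).symm

theorem dd_left {γ δ : Ordinal.{w}} (h : γ ≤ δ) (hδ : δ ≤ β) :
    dd β B A b a k γ δ h =
      eqToHom (D_left β B A (h.trans hδ)) ≫ b γ δ h ≫ eqToHom (D_left β B A hδ).symm :=
  dif_pos hδ

theorem dd_mid {γ δ : Ordinal.{w}} (h : γ ≤ δ) (hγ : γ ≤ β) (hδ : ¬ δ ≤ β) :
    dd β B A b a k γ δ h =
      eqToHom (D_left β B A hγ) ≫ b γ β hγ ≫ k ≫ a 0 (δ - β) ((zero_le (a := _))) ≫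
        eqToHom (D_right β B A hδ).symm := by
  rw [dd, dif_neg hδ, dif_pos hγ]

theorem dd_right {γ δ : Ordinal.{w}} (h : γ ≤ δ) (hγ : ¬ γ ≤ β) (hδ : ¬ δ ≤ β) :
    dd β B A b a k γ δ h =
      eqToHom (D_right β B A hγ) ≫ a (γ - β) (δ - β) (sub_le_sub' β h hδ) ≫
        eqToHom (D_right β B A hδ).symm := by
  rw [dd, dif_neg hδ, dif_neg hγ]


theorem not_add_le {v : Ordinal.{w}} (hv : v ≠ 0) : ¬ β + v ≤ β := by
  have h : β + 0 < β + v := (add_lt_add_iff_left β).mpr (pos_iff_ne_zero.mpr hv)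
  rw [add_zero] at h
  exact not_le.mpr h

theorem D_add {v : Ordinal.{w}} (hv : v ≠ 0) : D β B A (β + v) = A v := by
  rw [D_right β B A (not_add_le β hv), Ordinal.add_sub_cancel]

theorem dd_id (hBid : ∀ γ, b γ γ le_rfl = 𝟙 (B γ)) (hAid : ∀ x, a x x le_rfl = 𝟙 (A x)) :
    ∀ γ : Ordinal.{w}, dd β B A b a k γ γ le_rfl = 𝟙 (D β B A γ) := by
  intro γ
  by_cases hγ : γ ≤ β
  · rw [dd_left β B A b a k le_rfl hγ, hBid γ]; simp
  · rw [dd_right β B A b a k le_rfl hγ hγ, hAid]; simp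

theorem dd_comp
    (hBcomp : ∀ (γ δ ε : Ordinal.{w}) (h₁ : γ ≤ δ) (h₂ : δ ≤ ε),
      b γ δ h₁ ≫ b δ ε h₂ = b γ ε (h₁.trans h₂))
    (hAcomp : ∀ (x y z : Ordinal.{w}) (h₁ : x ≤ y) (h₂ : y ≤ z),
      a x y h₁ ≫ a y z h₂ = a x z (h₁.trans h₂)) :
    ∀ (γ δ ε : Ordinal.{w}) (h₁ : γ ≤ δ) (h₂ : δ ≤ ε),
      dd β B A b a k γ δ h₁ ≫ dd β B A b a k δ ε h₂ = dd β B A b a k γ ε (h₁.trans h₂) := by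
  intro γ δ ε h₁ h₂
  by_cases hε : ε ≤ β
  · have hδ := h₂.trans hε
    rw [dd_left β B A b a k h₁ hδ, dd_left β B A b a k h₂ hε,
      dd_left β B A b a k (h₁.trans h₂) hε]
    simp only [Category.assoc, eqToHom_trans_assoc, eqToHom_refl, Category.id_comp,
      reassoc_of% hBcomp]
  · by_cases hδ : δ ≤ β
    · have hγ := h₁.trans hδ
      rw [dd_left β B A b a k h₁ hδ, dd_mid β B A b a k h₂ hδ hε,
        dd_mid β B A b a k (h₁.trans h₂) hγ hε]
      simp only [Category.assoc, eqToHom_trans_assoc, eqToHom_refl, Category.id_comp,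
        reassoc_of% hBcomp]
    · by_cases hγ : γ ≤ β
      · rw [dd_mid β B A b a k h₁ hγ hδ, dd_right β B A b a k h₂ hδ hε,
          dd_mid β B A b a k (h₁.trans h₂) hγ hε]
        simp only [Category.assoc, eqToHom_trans_assoc, eqToHom_refl, Category.id_comp,
          reassoc_of% hAcomp]
      · rw [dd_right β B A b a k h₁ hγ hδ, dd_right β B A b a k h₂ hδ hε,
          dd_right β B A b a k (h₁.trans h₂) hγ hε]
        simp only [Category.assoc, eqToHom_trans_assoc, eqToHom_refl, Category.id_comp,
          reassoc_of% hAcomp]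

theorem dd_succ (α : Ordinal.{w}) (J : MorphismProperty C)
    (hpost : ∀ ⦃X Y Z : C⦄ (f : X ⟶ Y) (g : Y ⟶ Z), J f → J (f ≫ g))
    (hpre : ∀ ⦃X Y Z : C⦄ (f : X ⟶ Y) (g : Y ⟶ Z), J g → J (f ≫ g))
    (hBid : ∀ γ, b γ γ le_rfl = 𝟙 (B γ))
    (hBsucc : ∀ γ : Ordinal.{w}, γ < β → J (b γ (γ + 1) ((le_self_add (a := γ) (b := 1)))))
    (hAsucc : ∀ x : Ordinal.{w}, x < α → J (a x (x + 1) ((le_self_add (a := x) (b := 1))))) :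
    ∀ γ : Ordinal.{w}, γ < β + α →
      J (dd β B A b a k γ (γ + 1) ((le_self_add (a := γ) (b := 1)))) := by
  have hlt1 : ∀ x : Ordinal.{w}, x < x + 1 := fun x => by
    rw [Ordinal.add_one_eq_succ]; exact Order.lt_succ x
  intro γ hγ
  by_cases hδ : γ + 1 ≤ β
  · rw [dd_left β B A b a k ((le_self_add (a := γ) (b := 1))) hδ]
    exact hpre _ _ (hpost _ _ (hBsucc γ (lt_of_lt_of_le (hlt1 γ) hδ)))
  · by_cases hγ' : γ ≤ β
    · have hγβ : γ = β := by
        refine le_antisymm hγ' ?_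
        have hβ : β < γ + 1 := not_le.mp hδ
        rwa [Ordinal.add_one_eq_succ, Order.lt_succ_iff] at hβ
      subst hγβ
      have hα0 : (0 : Ordinal.{w}) < α := by
        have h2 : γ + 0 < γ + α := by simpa using hγ
        exact (add_lt_add_iff_left γ).mp h2
      rw [dd_mid γ B A b a k ((le_self_add (a := γ) (b := 1))) hγ' hδ, hBid,
        chain_congr a (rfl : (0 : Ordinal.{w}) = 0)
          (show γ + 1 - γ = 0 + 1 by rw [Ordinal.add_sub_cancel, zero_add])
          ((zero_le (a := _))) ((le_self_add (a := 0) (b := 1)))]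
      simp only [Category.assoc, Category.id_comp, eqToHom_refl, eqToHom_trans]
      exact hpre _ _ (hpre _ _ (hpost _ _ (hAsucc 0 hα0)))
    · have hβγ : β < γ := not_le.mp hγ'
      have hsub : γ - β < α := by
        refine (add_lt_add_iff_left β).mp ?_
        rwa [Ordinal.add_sub_cancel_of_le hβγ.le]
      rw [dd_right β B A b a k ((le_self_add (a := γ) (b := 1))) hγ' hδ,
        chain_congr a (rfl : γ - β = γ - β)
          (show γ + 1 - β = (γ - β) + 1 by
            rw [← Ordinal.add_sub_cancel β (γ - β + 1), ← add_assoc,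
              Ordinal.add_sub_cancel_of_le hβγ.le])
          (sub_le_sub' β ((le_self_add (a := γ) (b := 1))) hδ) ((le_self_add (a := _) (b := 1)))]
      simp only [Category.assoc, Category.id_comp, eqToHom_refl, eqToHom_trans]
      exact hpre _ _ (hpost _ _ (hAsucc (γ - β) hsub))


theorem dd_mid_add {γ v : Ordinal.{w}} (hγ : γ ≤ β) (hv : v ≠ 0) (h : γ ≤ β + v) :
    dd β B A b a k γ (β + v) h =
      eqToHom (D_left β B A hγ) ≫ b γ β hγ ≫ k ≫ a 0 v ((zero_le (a := v))) ≫
        eqToHom (D_add β B A hv).symm := by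
  rw [dd_mid β B A b a k h hγ (not_add_le β hv),
    chain_congr a (rfl : (0 : Ordinal.{w}) = 0) (Ordinal.add_sub_cancel β v)
      ((zero_le (a := _))) ((zero_le (a := _)))]
  simp [eqToHom_trans]

theorem dd_right_add {γ v : Ordinal.{w}} (hγ : ¬ γ ≤ β) (hv : v ≠ 0) (h : γ ≤ β + v) :
    dd β B A b a k γ (β + v) h =
      eqToHom (D_right β B A hγ) ≫ a (γ - β) v (Ordinal.sub_le.mpr h) ≫
        eqToHom (D_add β B A hv).symm := by
  rw [dd_right β B A b a k h hγ (not_add_le β hv),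
    chain_congr a (rfl : γ - β = γ - β) (Ordinal.add_sub_cancel β v)
      (sub_le_sub' β h (not_add_le β hv)) (Ordinal.sub_le.mpr h)]
  simp [eqToHom_trans]

theorem dd_add_raw {v δ : Ordinal.{w}} (hv : v ≠ 0) (hδ : ¬ δ ≤ β) (h : β + v ≤ δ) :
    dd β B A b a k (β + v) δ h =
      eqToHom (D_add β B A hv) ≫
        a v (δ - β) (by have := sub_le_sub' β h hδ; rwa [Ordinal.add_sub_cancel] at this) ≫
        eqToHom (D_right β B A hδ).symm := by
  rw [dd_right β B A b a k h (not_add_le β hv) hδ,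
    chain_congr a (Ordinal.add_sub_cancel β v) (rfl : δ - β = δ - β)
      (sub_le_sub' β h hδ)
      (by have := sub_le_sub' β h hδ; rwa [Ordinal.add_sub_cancel] at this)]
  simp [eqToHom_trans]

theorem dd_add_add {u v : Ordinal.{w}} (hu : u ≠ 0) (hv : v ≠ 0) (h : β + u ≤ β + v) :
    dd β B A b a k (β + u) (β + v) h =
      eqToHom (D_add β B A hu) ≫ a u v (le_of_add_le_add_left h) ≫
        eqToHom (D_add β B A hv).symm := by
  rw [dd_right β B A b a k h (not_add_le β hu) (not_add_le β hv),
    chain_congr a (Ordinal.add_sub_cancel β u) (Ordinal.add_sub_cancel β v)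
      (sub_le_sub' β h (not_add_le β hv)) (le_of_add_le_add_left h)]
  simp [eqToHom_trans]

theorem dd_limit (α : Ordinal.{w})
    (hAcomp : ∀ (x y z : Ordinal.{w}) (h₁ : x ≤ y) (h₂ : y ≤ z),
      a x y h₁ ≫ a y z h₂ = a x z (h₁.trans h₂))
    (hBlim : ∀ δ : Ordinal.{w}, δ ≤ β → Order.IsSuccLimit δ →
      ∀ (W : C) (c : ∀ γ : Ordinal.{w}, γ < δ → (B γ ⟶ W)),
        (∀ (γ γ' : Ordinal.{w}) (h : γ ≤ γ') (h' : γ' < δ),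
            b γ γ' h ≫ c γ' h' = c γ (lt_of_le_of_lt h h')) →
        ∃! t : B δ ⟶ W, ∀ (γ : Ordinal.{w}) (h : γ < δ), b γ δ h.le ≫ t = c γ h)
    (hAlim : ∀ x : Ordinal.{w}, x ≤ α → Order.IsSuccLimit x →
      ∀ (W : C) (c : ∀ y : Ordinal.{w}, y < x → (A y ⟶ W)),
        (∀ (y y' : Ordinal.{w}) (h : y ≤ y') (h' : y' < x),
            a y y' h ≫ c y' h' = c y (lt_of_le_of_lt h h')) →
        ∃! t : A x ⟶ W, ∀ (y : Ordinal.{w}) (h : y < x), a y x h.le ≫ t = c y h) :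
    ∀ δ : Ordinal.{w}, δ ≤ β + α → Order.IsSuccLimit δ →
      ∀ (W : C) (c : ∀ γ : Ordinal.{w}, γ < δ → (D β B A γ ⟶ W)),
        (∀ (γ γ' : Ordinal.{w}) (h : γ ≤ γ') (h' : γ' < δ),
            dd β B A b a k γ γ' h ≫ c γ' h' = c γ (lt_of_le_of_lt h h')) →
        ∃! t : D β B A δ ⟶ W,
          ∀ (γ : Ordinal.{w}) (h : γ < δ), dd β B A b a k γ δ h.le ≫ t = c γ h := by
  intro δ hδα hδlim W c hc
  by_cases hδβ : δ ≤ β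
  · -- limit stage inside the B-region
    have hclift : ∀ (γ γ' : Ordinal.{w}) (h : γ ≤ γ') (h' : γ' < δ),
        b γ γ' h ≫ (eqToHom (D_left β B A (h'.le.trans hδβ)).symm ≫ c γ' h') =
          eqToHom (D_left β B A ((lt_of_le_of_lt h h').le.trans hδβ)).symm ≫
            c γ (lt_of_le_of_lt h h') := by
      intro γ γ' h h'
      have hstep := hc γ γ' h h'
      rw [dd_left β B A b a k h (h'.le.trans hδβ)] at hstep
      rw [← hstep]; simp
    obtain ⟨t', ht', ht'u⟩ := hBlim δ hδβ hδlim W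
      (fun γ h => eqToHom (D_left β B A (h.le.trans hδβ)).symm ≫ c γ h) hclift
    refine ⟨eqToHom (D_left β B A hδβ) ≫ t', ?_, ?_⟩
    · intro γ h
      rw [dd_left β B A b a k h.le hδβ]
      simp only [Category.assoc, eqToHom_trans_assoc, eqToHom_refl, Category.id_comp]
      rw [ht' γ h]; simp
    · intro t₂ h₂
      have key : eqToHom (D_left β B A hδβ).symm ≫ t₂ = t' := by
        apply ht'u
        intro γ h
        have hstep := h₂ γ h
        rw [dd_left β B A b a k h.le hδβ] at hstep
        rw [← hstep]; simp
      rw [← key]; simp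
  · -- limit stage inside the A-region
    have hβδ : β < δ := not_le.mp hδβ
    have hkey : β + (δ - β) = δ := Ordinal.add_sub_cancel_of_le hβδ.le
    have hε0 : δ - β ≠ 0 := by
      intro h0
      rw [h0, add_zero] at hkey
      exact hδβ hkey.ge
    have hεlim : Order.IsSuccLimit (δ - β) := by
      rcases Ordinal.isSuccLimit_add_iff.mp (hkey ▸ hδlim) with h | ⟨h0, _⟩
      · exact h
      · exact absurd h0 hε0
    have hεα : δ - β ≤ α := Ordinal.sub_le.mpr hδα
    have hlt1 : ∀ x : Ordinal.{w}, x < x + 1 := fun x => by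
      rw [Ordinal.add_one_eq_succ]; exact Order.lt_succ x
    have hsucclt : ∀ x : Ordinal.{w}, x < δ - β → x + 1 < δ - β := fun x hx => by
      rw [Ordinal.add_one_eq_succ]; exact hεlim.succ_lt hx
    have hne1 : ∀ x : Ordinal.{w}, x + 1 ≠ 0 := fun x =>
      pos_iff_ne_zero.mp (lt_of_le_of_lt ((zero_le (a := x))) (hlt1 x))
    have hβx1 : ∀ x : Ordinal.{w}, x < δ - β → β + (x + 1) < δ := fun x hx => by
      have h2 := (add_lt_add_iff_left β).mpr (hsucclt x hx)
      rwa [hkey] at h2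
    set cp : ∀ x : Ordinal.{w}, x < δ - β → (A x ⟶ W) := fun x hx =>
      a x (x + 1) ((le_self_add (a := x) (b := 1))) ≫ eqToHom (D_add β B A (hne1 x)).symm ≫
        c (β + (x + 1)) (hβx1 x hx) with hcp
    have hcpcompat : ∀ (x x' : Ordinal.{w}) (h : x ≤ x') (h' : x' < δ - β),
        a x x' h ≫ cp x' h' = cp x (lt_of_le_of_lt h h') := by
      intro x x' h h'
      have hstep := hc (β + (x + 1)) (β + (x' + 1))
        (add_le_add_right (add_le_add_left h 1) β) (hβx1 x' h')
      rw [dd_add_add β B A b a k (hne1 x) (hne1 x') _] at hstep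
      have h3 : a (x + 1) (x' + 1) (add_le_add_left h 1) ≫
          eqToHom (D_add β B A (hne1 x')).symm ≫ c (β + (x' + 1)) (hβx1 x' h')
          = eqToHom (D_add β B A (hne1 x)).symm ≫ c (β + (x + 1)) (hβx1 x (lt_of_le_of_lt h h')) := by
        rw [← hstep]; simp
      show a x x' h ≫ a x' (x' + 1) _ ≫ eqToHom _ ≫ c _ _ =
        a x (x + 1) _ ≫ eqToHom _ ≫ c _ _
      rw [← Category.assoc (a x x' h), hAcomp,
        ← hAcomp x (x + 1) (x' + 1) ((le_self_add (a := x) (b := 1))) (add_le_add_left h 1),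
        Category.assoc, h3]
    obtain ⟨t', ht', ht'u⟩ := hAlim (δ - β) hεα hεlim W cp hcpcompat
    refine ⟨eqToHom (D_right β B A hδβ) ≫ t', ?_, ?_⟩
    · intro γ h
      by_cases hγβ : γ ≤ β
      · rw [dd_mid β B A b a k h.le hγβ hδβ]
        simp only [Category.assoc, eqToHom_trans_assoc, eqToHom_refl, Category.id_comp]
        rw [ht' 0 hεlim.pos]
        have hstep := hc γ (β + (0 + 1)) (hγβ.trans ((le_self_add (a := β) (b := (0 + 1)))))
          (hβx1 0 hεlim.pos)
        rw [dd_mid_add β B A b a k hγβ (hne1 0) _] at hstep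
        rw [← hstep]
        show eqToHom _ ≫ b γ β _ ≫ k ≫ (a 0 (0 + 1) _ ≫ eqToHom _ ≫ c _ _) = _
        simp
      · rw [dd_right β B A b a k h.le hγβ hδβ]
        simp only [Category.assoc, eqToHom_trans_assoc, eqToHom_refl, Category.id_comp]
        have hγε : γ - β < δ - β := by
          refine (add_lt_add_iff_left β).mp ?_
          rwa [Ordinal.add_sub_cancel_of_le (not_le.mp hγβ).le, hkey]
        rw [ht' (γ - β) hγε]
        have hγle : γ ≤ β + ((γ - β) + 1) := by
          have h2 : β + (γ - β) ≤ β + ((γ - β) + 1) :=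
            add_le_add_right ((le_self_add (a := _) (b := 1))) β
          rwa [Ordinal.add_sub_cancel_of_le (not_le.mp hγβ).le] at h2
        have hstep := hc γ (β + ((γ - β) + 1)) hγle (hβx1 (γ - β) hγε)
        rw [dd_right_add β B A b a k hγβ (hne1 (γ - β)) _] at hstep
        rw [← hstep]
        show eqToHom _ ≫ (a (γ - β) ((γ - β) + 1) _ ≫ eqToHom _ ≫ c _ _) = _
        simp
    · intro t₂ h₂
      have key : eqToHom (D_right β B A hδβ).symm ≫ t₂ = t' := by
        apply ht'u
        intro x hx
        have hstep := h₂ (β + (x + 1)) (hβx1 x hx)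
        rw [dd_add_raw β B A b a k (hne1 x) hδβ _] at hstep
        have h3 : a (x + 1) (δ - β)
            (by have := sub_le_sub' β (hβx1 x hx).le hδβ
                rwa [Ordinal.add_sub_cancel] at this) ≫
            eqToHom (D_right β B A hδβ).symm ≫ t₂ =
            eqToHom (D_add β B A (hne1 x)).symm ≫ c (β + (x + 1)) (hβx1 x hx) := by
          rw [← hstep]; simp
        show a x (δ - β) hx.le ≫ eqToHom _ ≫ t₂ = a x (x + 1) _ ≫ eqToHom _ ≫ c _ _
        rw [← hAcomp x (x + 1) (δ - β) ((le_self_add (a := x) (b := 1))) (hsucclt x hx).le,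
          Category.assoc, h3]
      rw [← key]; simp

end Splice


section Main

variable {C : Type u} [Category.{v} C]

theorem forward (J : MorphismProperty C)
    (hpost : ∀ ⦃X Y Z : C⦄ (f : X ⟶ Y) (g : Y ⟶ Z), J f → J (f ≫ g))
    (hpre : ∀ ⦃X Y Z : C⦄ (f : X ⟶ Y) (g : Y ⟶ Z), J g → J (f ≫ g))
    (α β : Ordinal.{w}) {X Y Z : C} (j : X ⟶ Y) (i : Y ⟶ Z)
    (hj : J.InductivePower β j) (hi : J.InductivePower α i) :
    J.InductivePower (β + α) (j ≫ i) := by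
  rcases eq_or_ne α 0 with rfl | hα
  · rw [add_zero]
    obtain ⟨B, b, hBid, hBcomp, hBsucc, hBlim, eB, hB, hjeq⟩ := hj
    exact ⟨B, b, hBid, hBcomp, hBsucc, hBlim, eB, hB ≫ i, by rw [hjeq]; simp⟩
  · obtain ⟨B, b, hBid, hBcomp, hBsucc, hBlim, eB, hB, hjeq⟩ := hj
    obtain ⟨A, a, hAid, hAcomp, hAsucc, hAlim, eA, hA, hieq⟩ := hi
    refine ⟨Stmt8Aux.D β B A, Stmt8Aux.dd β B A b a (hB ≫ eA.hom),
      Stmt8Aux.dd_id β B A b a _ hBid hAid,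
      Stmt8Aux.dd_comp β B A b a _ hBcomp hAcomp,
      Stmt8Aux.dd_succ β B A b a _ α J hpost hpre hBid hBsucc hAsucc,
      Stmt8Aux.dd_limit β B A b a _ α hAcomp hBlim hAlim,
      eB.trans (eqToIso (Stmt8Aux.D_left β B A ((zero_le (a := β)))).symm),
      eqToHom (Stmt8Aux.D_add β B A hα) ≫ hA, ?_⟩
    rw [hjeq, hieq,
      Stmt8Aux.dd_mid_add β B A b a _ ((zero_le (a := β))) hα ((zero_le (a := _)))]
    simp

theorem backward (J : MorphismProperty C) (α β : Ordinal.{w}) {X Z : C} (g : X ⟶ Z)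
    (hg : J.InductivePower (β + α) g) :
    (J.InductivePower α).IdealProd (J.InductivePower β) g := by
  obtain ⟨Dx, d, hid, hcomp, hsucc, hlim, e, h, hgeq⟩ := hg
  refine ⟨Dx β, e.hom ≫ d 0 β ((zero_le (a := β))),
    d β (β + α) ((le_self_add (a := β) (b := α))) ≫ h, ?_, ?_, ?_⟩
  · exact ⟨Dx, d, hid, hcomp,
      fun γ hγ => hsucc γ (lt_of_lt_of_le hγ ((le_self_add (a := β) (b := α)))),
      fun δ hδ hl => hlim δ (hδ.trans ((le_self_add (a := β) (b := α)))) hl,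
      e, 𝟙 (Dx β), by simp⟩
  · refine ⟨fun x => Dx (β + x), fun x y hxy => d (β + x) (β + y) (add_le_add_right hxy β),
      fun x => hid (β + x), fun x y z h1 h2 => hcomp (β + x) (β + y) (β + z) _ _, ?_, ?_, ?_⟩
    · -- successor maps
      intro x hx
      have key : ∀ (y : Ordinal.{w}) (hy : β + x + 1 = y) (hle : β + x ≤ y),
          J (d (β + x) y hle) := by
        rintro y rfl hle
        exact hsucc (β + x) ((add_lt_add_iff_left β).mpr hx)
      exact key (β + (x + 1)) (add_assoc β x 1)
        (add_le_add_right ((le_self_add (a := x) (b := 1))) β)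
    · -- limit stages
      intro x hxα hxlim W c hcc
      have hxpos : (0 : Ordinal.{w}) < x := hxlim.pos
      have hsub : ∀ γ : Ordinal.{w}, β ≤ γ → γ < β + x → γ - β < x := fun γ h1 h2 => by
        refine (add_lt_add_iff_left β).mp ?_
        rwa [Ordinal.add_sub_cancel_of_le h1]
      set Cc : ∀ γ : Ordinal.{w}, γ < β + x → (Dx γ ⟶ W) := fun γ hγ =>
        if hβγ : β ≤ γ then
          eqToHom (congrArg Dx (Ordinal.add_sub_cancel_of_le hβγ).symm) ≫
            c (γ - β) (hsub γ hβγ hγ)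
        else d γ β (not_le.mp hβγ).le ≫ eqToHom (congrArg Dx (add_zero β).symm) ≫ c 0 hxpos
        with hCc
      have Ckey : ∀ (u : Ordinal.{w}) (hu : u < x) (hγ : β + u < β + x),
          Cc (β + u) hγ = c u hu := by
        intro u hu hγ
        simp only [hCc]
        rw [dif_pos ((le_self_add (a := β) (b := u)))]
        exact Stmt8Aux.fam_eq (F := fun z => Dx (β + z)) c
          ((Ordinal.add_sub_cancel β u).symm) hu (hsub _ ((le_self_add (a := β) (b := u))) hγ)
      have Ckey2 : ∀ (γ : Ordinal.{w}) (hγβ : ¬ β ≤ γ) (hγ : γ < β + x),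
          Cc γ hγ = d γ β (not_le.mp hγβ).le ≫
            eqToHom (congrArg Dx (add_zero β).symm) ≫ c 0 hxpos := by
        intro γ hγβ hγ
        simp only [hCc]
        rw [dif_neg hγβ]
      have Ccompat : ∀ (γ γ' : Ordinal.{w}) (h : γ ≤ γ') (h' : γ' < β + x),
          d γ γ' h ≫ Cc γ' h' = Cc γ (lt_of_le_of_lt h h') := by
        intro γ γ' hle h'
        by_cases hβγ' : β ≤ γ'
        · obtain ⟨v, rfl⟩ : ∃ v, γ' = β + v :=
            ⟨γ' - β, (Ordinal.add_sub_cancel_of_le hβγ').symm⟩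
          have hv : v < x := (add_lt_add_iff_left β).mp h'
          rw [Ckey v hv h']
          by_cases hβγ : β ≤ γ
          · obtain ⟨u, rfl⟩ : ∃ u, γ = β + u :=
              ⟨γ - β, (Ordinal.add_sub_cancel_of_le hβγ).symm⟩
            have hu : u < x := (add_lt_add_iff_left β).mp (lt_of_le_of_lt hle h')
            rw [Ckey u hu (lt_of_le_of_lt hle h')]
            exact hcc u v (le_of_add_le_add_left hle) hv
          · rw [Ckey2 γ hβγ (lt_of_le_of_lt hle h')]
            have h0 := hcc 0 v ((zero_le (a := v))) hv
            rw [← hcomp γ β (β + v) (not_le.mp hβγ).le ((le_self_add (a := β) (b := v))),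
              Category.assoc]
            congr 1
            rw [Stmt8Aux.chain_congr d ((add_zero β).symm) (rfl : β + v = β + v)
              ((le_self_add (a := β) (b := v)))
              (by rw [add_zero]; exact (le_self_add (a := β) (b := v)))]
            simp only [Category.assoc, eqToHom_refl, Category.comp_id]
            rw [h0]
        · have hγ'β : γ' < β := not_le.mp hβγ'
          rw [Ckey2 γ' hβγ' h',
            Ckey2 γ (not_le.mpr (lt_of_le_of_lt hle hγ'β)) (lt_of_le_of_lt hle h'),
            ← Category.assoc, hcomp]
      obtain ⟨T, hT, hTu⟩ := hlim (β + x) (add_le_add_right hxα β)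
        (Ordinal.isSuccLimit_add β hxlim) W Cc Ccompat
      refine ⟨T, ?_, ?_⟩
      · intro u hu
        have hres := hT (β + u) ((add_lt_add_iff_left β).mpr hu)
        rw [Ckey u hu ((add_lt_add_iff_left β).mpr hu)] at hres
        exact hres
      · intro t₂ h₂
        apply hTu
        intro γ hγ
        by_cases hβγ : β ≤ γ
        · obtain ⟨u, rfl⟩ : ∃ u, γ = β + u :=
            ⟨γ - β, (Ordinal.add_sub_cancel_of_le hβγ).symm⟩
          rw [Ckey u ((add_lt_add_iff_left β).mp hγ) hγ]
          exact h₂ u _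
        · rw [Ckey2 γ hβγ hγ]
          have h0 := h₂ 0 hxpos
          rw [← hcomp γ β (β + x) (not_le.mp hβγ).le ((le_self_add (a := β) (b := x))),
            Category.assoc]
          congr 1
          rw [Stmt8Aux.chain_congr d ((add_zero β).symm) (rfl : β + x = β + x)
            ((le_self_add (a := β) (b := x)))
            (by rw [add_zero]; exact (le_self_add (a := β) (b := x)))]
          simp only [Category.assoc, eqToHom_refl, Category.comp_id]
          rw [h0]
    · -- the chain presents i
      refine ⟨eqToIso (congrArg Dx (add_zero β).symm), h, ?_⟩
      rw [Stmt8Aux.chain_congr d ((add_zero β).symm) (rfl : β + α = β + α)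
        ((le_self_add (a := β) (b := α)))
        (by rw [add_zero]; exact (le_self_add (a := β) (b := α)))]
      simp
  · rw [hgeq, ← hcomp 0 β (β + α) ((zero_le (a := β))) ((le_self_add (a := β) (b := α)))]
    simp

end Main

end Stmt8Aux


/-- For an ideal `J` of morphisms of an additive category in which the relevant colimits
exist, and any two ordinals `α` and `β`, the product ideal `J^{(α)} · J^{(β)}` equals the
`(β + α)`-th inductive power `J^{(β+α)}`. -/
theorem stmt8 {C : Type u} [Category.{v} C] [Preadditive C]
    [HasColimitsOfSize.{w, w} C]
    (J : MorphismProperty C)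
    (hadd : ∀ ⦃X Y : C⦄ (f g : X ⟶ Y), J f → J g → J (f + g))
    (hpost : ∀ ⦃X Y Z : C⦄ (f : X ⟶ Y) (g : Y ⟶ Z), J f → J (f ≫ g))
    (hpre : ∀ ⦃X Y Z : C⦄ (f : X ⟶ Y) (g : Y ⟶ Z), J g → J (f ≫ g))
    (α β : Ordinal.{w}) :
    (J.InductivePower α).IdealProd (J.InductivePower β) = J.InductivePower (β + α) := by
  funext X Y g
  apply propext
  constructor
  · rintro ⟨Y', j, i, hj, hi, rfl⟩
    exact Stmt8Aux.forward J hpost hpre α β j i hj hi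
  · intro hg
    exact Stmt8Aux.backward J α β g hg
end

section
/- Let J be an idempotent ideal (J = J∘J) of morphisms in a cocomplete additive category such that every countable chain of morphisms in J has a colimit. Then J equals its ω-th inductive power: J = J^{(ω)}. -/
open CategoryTheory Limits

universe w v u

namespace Stmt9Aux


noncomputable def nof (α : Ordinal.{w}) : ℕ := α.card.toNat
lemma nof_natCast (n : ℕ) : nof ((n : ℕ) : Ordinal.{w}) = n := by
  simp [nof, Ordinal.card_nat]
lemma nof_zero : nof (0 : Ordinal.{w}) = 0 := by
  simpa using nof_natCast.{w} 0
lemma nof_mono {α β : Ordinal.{w}} (h : α ≤ β) (hβ : β < Ordinal.omega0) :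
    nof α ≤ nof β := by
  obtain ⟨n, rfl⟩ := Ordinal.lt_omega0.1 hβ
  obtain ⟨m, rfl⟩ := Ordinal.lt_omega0.1 (h.trans_lt hβ)
  simpa [nof_natCast] using Nat.cast_le.1 h

set_option linter.unusedSectionVars false

variable {C : Type u} [Category.{v} C] [HasColimits C]
variable (B : ℕ → C) (f : ∀ n, B n ⟶ B (n + 1))

noncomputable def A (α : Ordinal.{w}) : C :=
  if α < Ordinal.omega0 then B (nof α) else colimit (Functor.ofSequence f)
lemma A_lt {α : Ordinal.{w}} (h : α < Ordinal.omega0) : A B f α = B (nof α) := if_pos h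
lemma A_ge {α : Ordinal.{w}} (h : ¬ α < Ordinal.omega0) :
    A B f α = colimit (Functor.ofSequence f) := if_neg h
lemma A_omega : A B f (Ordinal.omega0.{w}) = colimit (Functor.ofSequence f) :=
  A_ge B f (lt_irrefl _)

noncomputable def amap (α β : Ordinal.{w}) (h : α ≤ β) : A B f α ⟶ A B f β :=
  if hα : α < Ordinal.omega0 then
    if hβ : β < Ordinal.omega0 then
      eqToHom (A_lt B f hα) ≫ (Functor.ofSequence f).map (homOfLE (nof_mono h hβ)) ≫
        eqToHom (A_lt B f hβ).symm
    else
      eqToHom (A_lt B f hα) ≫ colimit.ι (Functor.ofSequence f) (nof α) ≫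
        eqToHom (A_ge B f hβ).symm
  else
    eqToHom ((A_ge B f hα).trans (A_ge B f (fun hβ => hα (h.trans_lt hβ))).symm)

lemma amap_self (α : Ordinal.{w}) : amap B f α α le_rfl = 𝟙 (A B f α) := by
  by_cases hα : α < Ordinal.omega0
  · rw [amap, dif_pos hα, dif_pos hα]
    have : homOfLE (nof_mono (le_refl α) hα) = 𝟙 (nof α) := rfl
    simp [this, Functor.ofSequence]
  · rw [amap, dif_neg hα]; simp

lemma amap_comp (α β γ : Ordinal.{w}) (h₁ : α ≤ β) (h₂ : β ≤ γ) :
    amap B f α β h₁ ≫ amap B f β γ h₂ = amap B f α γ (h₁.trans h₂) := by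
  by_cases hα : α < Ordinal.omega0
  · by_cases hβ : β < Ordinal.omega0
    · by_cases hγ : γ < Ordinal.omega0
      · rw [amap, amap, amap, dif_pos hα, dif_pos hβ, dif_pos hα, dif_pos hβ,
          dif_pos hγ, dif_pos hγ]
        simp [Functor.ofSequence]
        rw [← Category.assoc (Functor.OfSequence.map f _ _ _), ← Functor.OfSequence.map_comp]
      · rw [amap, amap, amap, dif_pos hα, dif_pos hβ, dif_pos hβ, dif_neg hγ,
          dif_pos hα, dif_neg hγ]
        have hw := colimit.w (Functor.ofSequence f) (homOfLE (nof_mono h₁ hβ))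
        simp only [Functor.ofSequence] at hw ⊢
        simp [← hw]
    · have hγ : ¬ γ < Ordinal.omega0 := fun hh => hβ (h₂.trans_lt hh)
      rw [amap, amap, amap, dif_pos hα, dif_neg hβ, dif_neg hβ, dif_pos hα, dif_neg hγ]
      erw [Category.assoc, Category.assoc, eqToHom_trans]
  · have hβ : ¬ β < Ordinal.omega0 := fun hh => hα (h₁.trans_lt hh)
    have hγ : ¬ γ < Ordinal.omega0 := fun hh => hβ (h₂.trans_lt hh)
    rw [amap, amap, amap, dif_neg hα, dif_neg hβ, dif_neg hα]
    simp

lemma amap_lt_lt {α β : Ordinal.{w}} (hα : α < Ordinal.omega0) (hβ : β < Ordinal.omega0)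
    (h : α ≤ β) {m n : ℕ} (hm : nof α = m) (hn : nof β = n) (hmn : m ≤ n) :
    amap B f α β h = eqToHom ((A_lt B f hα).trans (congrArg B hm)) ≫
      (Functor.ofSequence f).map (homOfLE hmn) ≫
      eqToHom ((A_lt B f hβ).trans (congrArg B hn)).symm := by
  subst hm hn
  rw [amap, dif_pos hα, dif_pos hβ]

lemma amap_lt_omega {α : Ordinal.{w}} (hα : α < Ordinal.omega0) {n : ℕ}
    (hn : nof α = n) :
    amap B f α Ordinal.omega0 hα.le = eqToHom ((A_lt B f hα).trans (congrArg B hn)) ≫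
      colimit.ι (Functor.ofSequence f) n ≫ eqToHom (A_omega B f).symm := by
  subst hn
  rw [amap, dif_pos hα, dif_neg (lt_irrefl _)]

lemma J_map_of_lt (J : MorphismProperty C)
    (hpost : ∀ ⦃X Y Z : C⦄ (u : X ⟶ Y) (v : Y ⟶ Z), J u → J (u ≫ v))
    (hJf : ∀ n, J (f n)) :
    ∀ (m k : ℕ) (h : m ≤ k), m < k → J ((Functor.ofSequence f).map (homOfLE h)) := by
  intro m k
  induction k with
  | zero => intro h hlt; omega
  | succ k ih =>
    intro h hlt
    rcases Nat.lt_succ_iff_lt_or_eq.1 hlt with h' | rfl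
    · have hmk : m ≤ k := h'.le
      have : (homOfLE h : m ⟶ (k + 1)) = homOfLE hmk ≫ homOfLE (Nat.le_add_right k 1) := rfl
      rw [this, Functor.map_comp, Functor.ofSequence_map_homOfLE_succ]
      exact hpost _ _ (ih hmk h')
    · rw [Functor.ofSequence_map_homOfLE_succ]
      exact hJf m

lemma J_amap_succ (J : MorphismProperty C)
    (hpost : ∀ ⦃X Y Z : C⦄ (u : X ⟶ Y) (v : Y ⟶ Z), J u → J (u ≫ v))
    (hpre : ∀ ⦃X Y Z : C⦄ (u : X ⟶ Y) (v : Y ⟶ Z), J v → J (u ≫ v))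
    (hJf : ∀ n, J (f n)) (α : Ordinal.{w}) (hα : α < Ordinal.omega0) :
    J (amap B f α (α + 1) (le_self_add)) := by
  have hβ : α + 1 < Ordinal.omega0 := by
    rw [Ordinal.add_one_eq_succ]
    exact Ordinal.isSuccLimit_omega0.succ_lt hα
  have hlt : nof α < nof (α + 1) := by
    obtain ⟨n, rfl⟩ := Ordinal.lt_omega0.1 hα
    have hs : ((n : ℕ) : Ordinal.{w}) + 1 = (((n + 1 : ℕ)) : Ordinal.{w}) :=
      (Nat.cast_succ n).symm
    rw [hs, nof_natCast, nof_natCast]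
    omega
  rw [amap_lt_lt B f hα hβ (le_self_add) rfl rfl hlt.le]
  exact hpre _ _ (hpost _ _ (J_map_of_lt B f J hpost hJf _ _ hlt.le hlt))

lemma exists_unique_desc (W : C)
    (c : ∀ α : Ordinal.{w}, α < Ordinal.omega0 → (A B f α ⟶ W))
    (hc : ∀ (α α' : Ordinal.{w}) (h : α ≤ α') (h' : α' < Ordinal.omega0),
        amap B f α α' h ≫ c α' h' = c α (lt_of_le_of_lt h h')) :
    ∃! t : A B f Ordinal.omega0.{w} ⟶ W,
      ∀ (α : Ordinal.{w}) (h : α < Ordinal.omega0),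
        amap B f α Ordinal.omega0 h.le ≫ t = c α h := by
  set G := Functor.ofSequence f with hG
  have eAB : ∀ n : ℕ, A B f ((n : ℕ) : Ordinal.{w}) = B n := fun n => by
    rw [A_lt B f (Ordinal.nat_lt_omega0 n), nof_natCast]
  let cpt : ∀ n : ℕ, B n ⟶ W := fun n =>
    eqToHom (eAB n).symm ≫ c _ (Ordinal.nat_lt_omega0 n)
  have hnat : ∀ (m n : ℕ) (φ : m ⟶ n), G.map φ ≫ cpt n = cpt m := by
    intro m n φ
    have hmn : m ≤ n := leOfHom φ
    have hφ : φ = homOfLE hmn := rfl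
    have key := hc ((m : ℕ) : Ordinal.{w}) ((n : ℕ) : Ordinal.{w})
      (by exact_mod_cast hmn) (Ordinal.nat_lt_omega0 n)
    rw [amap_lt_lt B f (Ordinal.nat_lt_omega0 m) (Ordinal.nat_lt_omega0 n) _
      (nof_natCast m) (nof_natCast n) hmn] at key
    rw [hφ]
    simp only [cpt]
    rw [← key]
    simp [G, Functor.ofSequence]
  let K : Cocone G := Cocone.mk W ⟨cpt, by intro m n φ; simpa [G, Functor.ofSequence] using hnat m n φ⟩
  have hprop : ∀ (α : Ordinal.{w}) (h : α < Ordinal.omega0),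
      amap B f α Ordinal.omega0 h.le ≫ (eqToHom (A_omega B f) ≫ colimit.desc G K) =
        c α h := by
    intro α h
    obtain ⟨n, rfl⟩ := Ordinal.lt_omega0.1 h
    rw [amap_lt_omega B f h (nof_natCast n)]
    erw [Category.assoc, Category.assoc, eqToHom_trans_assoc, eqToHom_refl, Category.id_comp, colimit.ι_desc]; simp [K, cpt]
  refine ⟨eqToHom (A_omega B f) ≫ colimit.desc G K, hprop, ?_⟩
  intro t' ht'
  rw [← cancel_epi (eqToHom (A_omega B f).symm)]
  apply colimit.hom_ext
  intro n
  have h1 := ht' ((n : ℕ) : Ordinal.{w}) (Ordinal.nat_lt_omega0 n)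
  have h2 := hprop ((n : ℕ) : Ordinal.{w}) (Ordinal.nat_lt_omega0 n)
  rw [amap_lt_omega B f (Ordinal.nat_lt_omega0 n) (nof_natCast n)] at h1 h2
  have h1' : colimit.ι G n ≫ eqToHom (A_omega B f).symm ≫ t' =
      eqToHom ((A_lt B f (Ordinal.nat_lt_omega0 n)).trans (congrArg B (nof_natCast n))).symm ≫
        c ((n : ℕ) : Ordinal.{w}) (Ordinal.nat_lt_omega0 n) := by
    rw [← h1]; simp only [Category.assoc]; erw [eqToHom_trans_assoc, eqToHom_refl, Category.id_comp]; exact (Category.assoc _ _ _).symm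
  have h2' : colimit.ι G n ≫ eqToHom (A_omega B f).symm ≫
      (eqToHom (A_omega B f) ≫ colimit.desc G K) =
      eqToHom ((A_lt B f (Ordinal.nat_lt_omega0 n)).trans (congrArg B (nof_natCast n))).symm ≫
        c ((n : ℕ) : Ordinal.{w}) (Ordinal.nat_lt_omega0 n) := by
    rw [← h2]; erw [Category.assoc, Category.assoc, eqToHom_trans_assoc, eqToHom_refl, Category.id_comp]; erw [eqToHom_trans_assoc, eqToHom_refl, Category.id_comp]; rfl
  rw [h1', h2']

noncomputable def chainAux {Y : C} {J : MorphismProperty C}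
    (fac : ∀ (Z : C) (g' : Z ⟶ Y), J g' →
      Σ' (M : C) (j : Z ⟶ M) (i : M ⟶ Y), J j ∧ J i ∧ g' = j ≫ i)
    (X : C) (g : X ⟶ Y) (hg : J g) : ℕ → Σ' (Z : C) (g' : Z ⟶ Y), J g'
  | 0 => ⟨X, g, hg⟩
  | (n + 1) =>
      let p := chainAux fac X g hg n
      let q := fac p.1 p.2.1 p.2.2
      ⟨q.1, q.2.2.1, q.2.2.2.2.1⟩

end Stmt9Aux

open Stmt9Aux

/-- An idempotent ideal `J = J ∘ J` of morphisms of a cocomplete additive category, such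
that every countable chain of morphisms in `J` has a colimit, equals its `ω`-th inductive
power: `J = J^{(ω)}`. -/
theorem stmt9 {C : Type u} [Category.{v} C] [Preadditive C] [HasColimits C]
    (J : MorphismProperty C)
    (hadd : ∀ ⦃X Y : C⦄ (f g : X ⟶ Y), J f → J g → J (f + g))
    (hpost : ∀ ⦃X Y Z : C⦄ (f : X ⟶ Y) (g : Y ⟶ Z), J f → J (f ≫ g))
    (hpre : ∀ ⦃X Y Z : C⦄ (f : X ⟶ Y) (g : Y ⟶ Z), J g → J (f ≫ g))
    (hidem : J.IdealProd J = J)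
    (hchain : ∀ (X : ℕ → C) (f : ∀ n, X n ⟶ X (n + 1)),
      (∀ n, J (f n)) → HasColimit (Functor.ofSequence f)) :
    J = J.InductivePower Ordinal.omega0.{w} := by
  funext X Y g
  apply propext
  constructor
  · -- J g → InductivePower
    intro hg
    have fac : ∀ (Z : C) (g' : Z ⟶ Y), J g' →
        Σ' (M : C) (j : Z ⟶ M) (i : M ⟶ Y), J j ∧ J i ∧ g' = j ≫ i := by
      intro Z g' hg'
      have h2 : J.IdealProd J g' := by rw [hidem]; exact hg'
      exact Classical.choice (by
        obtain ⟨M, j, i, hj, hi, hf⟩ := h2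
        exact ⟨⟨M, j, i, hj, hi, hf⟩⟩)
    let B : ℕ → C := fun n => (chainAux fac X g hg n).1
    let gs : ∀ n, B n ⟶ Y := fun n => (chainAux fac X g hg n).2.1
    let hJgs : ∀ n, J (gs n) := fun n => (chainAux fac X g hg n).2.2
    let f : ∀ n, B n ⟶ B (n + 1) := fun n =>
      (fac (chainAux fac X g hg n).1 (chainAux fac X g hg n).2.1
        (chainAux fac X g hg n).2.2).2.1
    have hJf : ∀ n, J (f n) := fun n =>
      (fac (chainAux fac X g hg n).1 (chainAux fac X g hg n).2.1
        (chainAux fac X g hg n).2.2).2.2.2.1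
    have hstep : ∀ n, gs n = f n ≫ gs (n + 1) := fun n =>
      (fac (chainAux fac X g hg n).1 (chainAux fac X g hg n).2.1
        (chainAux fac X g hg n).2.2).2.2.2.2.2
    -- cocone of the gs over the sequence
    have hgsle : ∀ (m n : ℕ) (h : m ≤ n),
        (Functor.ofSequence f).map (homOfLE h) ≫ gs n = gs m := by
      intro m n h
      induction n with
      | zero =>
        obtain rfl : m = 0 := Nat.le_zero.1 h
        have : (homOfLE h : (0:ℕ) ⟶ 0) = 𝟙 _ := rfl
        rw [this]; exact Category.id_comp _
      | succ n ih =>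
        rcases Nat.lt_succ_iff_lt_or_eq.1 (Nat.lt_succ_of_le h) with h' | rfl
        · have hmn : m ≤ n := Nat.lt_succ_iff.1 h'
          have : (homOfLE h : m ⟶ (n+1)) = homOfLE hmn ≫ homOfLE (Nat.le_add_right n 1) := rfl
          erw [this, Functor.map_comp, Category.assoc, Functor.ofSequence_map_homOfLE_succ,
            ← hstep n]
          exact ih hmn
        · have h2 : (homOfLE h : (n+1 : ℕ) ⟶ (n+1)) = 𝟙 _ := rfl
          rw [h2, CategoryTheory.Functor.map_id]; exact Category.id_comp _
    let KY : Cocone (Functor.ofSequence f) := Cocone.mk Y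
      ⟨gs, by
        intro m n φ
        have hφ : φ = homOfLE (leOfHom φ) := rfl
        exact (hgsle m n (leOfHom φ)).trans (Category.comp_id _).symm⟩
    refine ⟨A B f, amap B f, amap_self B f, amap_comp B f, ?_, ?_, ?_⟩
    · intro α hα
      exact J_amap_succ B f J hpost hpre hJf α hα
    · intro β hβle hβlim W c hc
      obtain rfl : β = Ordinal.omega0.{w} :=
        le_antisymm hβle (Ordinal.omega0_le_of_isSuccLimit hβlim)
      exact exists_unique_desc B f W c hc
    · have e0 : A B f 0 = B 0 := by
        rw [A_lt B f Ordinal.omega0_pos, nof_zero]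
      refine ⟨eqToIso (show X = A B f 0 from e0.symm),
        eqToHom (A_omega B f) ≫ colimit.desc (Functor.ofSequence f) KY, ?_⟩
      rw [amap_lt_omega B f Ordinal.omega0_pos nof_zero]
      simp only [eqToIso.hom, Category.assoc, eqToHom_trans_assoc, eqToHom_refl,
        Category.id_comp]
      erw [Category.assoc, eqToHom_trans_assoc, eqToHom_refl, Category.id_comp, eqToHom_refl,
        Category.id_comp, colimit.ι_desc]
      rfl
  · -- InductivePower → J
    rintro ⟨A, a, hid, hcomp, hsucc, hlim, e, h, rfl⟩
    have h1 : (0 : Ordinal.{w}) + 1 ≤ Ordinal.omega0 := by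
      rw [Ordinal.add_one_eq_succ]
      exact (Ordinal.isSuccLimit_omega0.succ_lt Ordinal.omega0_pos).le
    rw [← hcomp 0 ((0 : Ordinal.{w}) + 1) Ordinal.omega0 (le_self_add) h1]
    simp only [Category.assoc]
    exact hpre _ _ (hpost _ _ (hsucc 0 Ordinal.omega0_pos))
end

section
/- Let R be a ring and f : X → Y a ghost morphism of chain complexes of left R-modules (Hₙ(f) = 0 for all n). Then the pullback of the short exact sequence 0 → Σ⁻¹Y → cone(1_{Σ⁻¹Y}) → Y → 0 along f is a Cartan–Eilenberg exact sequence, i.e., it induces short exact sequences on cycles in every degree. -/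
open CategoryTheory Limits

universe u

namespace Stmt13

variable {R : Type u} [Ring R]

/-- The shift `Σ⁻¹Y` of a chain complex: `(Σ⁻¹Y)ₙ = Yₙ₊₁`, with negated differential. -/
def shiftNeg (Y : ChainComplex (ModuleCat.{u} R) ℤ) : ChainComplex (ModuleCat.{u} R) ℤ where
  X i := Y.X (i + 1)
  d i j := -Y.d (i + 1) (j + 1)
  shape := by
    intro i j hij
    try dsimp only
    rw [Y.shape, neg_zero]
    simp only [ComplexShape.down_Rel] at hij ⊢
    omega
  d_comp_d' := by intros; simp

/-- The cone of the identity of `Σ⁻¹Y`: the contractible complex with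
`cone(1_{Σ⁻¹Y})ₙ = Yₙ ⊕ Yₙ₊₁`, fitting in the degreewise split exact sequence
`0 → Σ⁻¹Y → cone(1_{Σ⁻¹Y}) → Y → 0`. -/
noncomputable def coneId (Y : ChainComplex (ModuleCat.{u} R) ℤ) :
    ChainComplex (ModuleCat.{u} R) ℤ where
  X i := Y.X i ⊞ Y.X (i + 1)
  d i j :=
    if hij : j + 1 = i then
      biprod.desc (biprod.lift (Y.d i j) (eqToHom (congrArg Y.X hij).symm))
        (biprod.lift 0 (-Y.d (i + 1) (j + 1)))
    else 0
  shape := by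
    intro i j hij
    simp only [ComplexShape.down_Rel] at hij
    try dsimp only
    rw [dif_neg hij]
  d_comp_d' := by
    intro i j k hij hjk
    simp only [ComplexShape.down_Rel] at hij hjk
    subst hij
    subst hjk
    try dsimp only
    rw [dif_pos rfl, dif_pos rfl]
    apply biprod.hom_ext' <;> apply biprod.hom_ext <;> simp

/-- The inclusion `Σ⁻¹Y → cone(1_{Σ⁻¹Y})`. -/
noncomputable def coneInl (Y : ChainComplex (ModuleCat.{u} R) ℤ) : shiftNeg Y ⟶ coneId Y where
  f i := biprod.inr
  comm' := by
    intro i j hij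
    simp only [ComplexShape.down_Rel] at hij
    subst hij
    dsimp only [coneId, shiftNeg]
    rw [dif_pos rfl]
    apply biprod.hom_ext <;> simp

/-- The projection `cone(1_{Σ⁻¹Y}) → Y`. -/
noncomputable def coneProj (Y : ChainComplex (ModuleCat.{u} R) ℤ) : coneId Y ⟶ Y where
  f i := biprod.fst
  comm' := by
    intro i j hij
    simp only [ComplexShape.down_Rel] at hij
    subst hij
    dsimp only [coneId]
    rw [dif_pos rfl]
    apply biprod.hom_ext' <;> simp

end Stmt13

open Stmt13

namespace Stmt13Aux

variable {R : Type u} [Ring R]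

lemma cmpApply {A B C : ModuleCat.{u} R} (f : A ⟶ B) (g : B ⟶ C) (x : A) :
    (f ≫ g) x = g (f x) := rfl

lemma addApply {A B : ModuleCat.{u} R} (f g : A ⟶ B) (x : A) :
    (f + g) x = f x + g x := rfl

lemma negApply {A B : ModuleCat.{u} R} (f : A ⟶ B) (x : A) :
    (-f) x = -(f x) := rfl

lemma biprod_decomp {A B : ModuleCat.{u} R} (z : ↑(A ⊞ B)) :
    z = (biprod.inl : A ⟶ A ⊞ B) ((biprod.fst : A ⊞ B ⟶ A) z)
      + (biprod.inr : B ⟶ A ⊞ B) ((biprod.snd : A ⊞ B ⟶ B) z) := by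
  have h := congrArg (fun (φ : A ⊞ B ⟶ A ⊞ B) => φ z)
    (biprod.total (X := A) (Y := B))
  simp only [addApply, cmpApply] at h
  exact h.symm


lemma zeroApply {A B : ModuleCat.{u} R} (x : A) : (0 : A ⟶ B) x = 0 := rfl

lemma inl_fst_apply {A B : ModuleCat.{u} R} (a : A) :
    (biprod.fst : A ⊞ B ⟶ A) ((biprod.inl : A ⟶ A ⊞ B) a) = a := by
  rw [← cmpApply, biprod.inl_fst]
  rfl

lemma inl_snd_apply {A B : ModuleCat.{u} R} (a : A) :
    (biprod.snd : A ⊞ B ⟶ B) ((biprod.inl : A ⟶ A ⊞ B) a) = 0 := by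
  rw [← cmpApply, biprod.inl_snd]
  rfl

lemma inr_fst_apply {A B : ModuleCat.{u} R} (b : B) :
    (biprod.fst : A ⊞ B ⟶ A) ((biprod.inr : B ⟶ A ⊞ B) b) = 0 := by
  rw [← cmpApply, biprod.inr_fst]
  rfl

lemma inr_snd_apply {A B : ModuleCat.{u} R} (b : B) :
    (biprod.snd : A ⊞ B ⟶ B) ((biprod.inr : B ⟶ A ⊞ B) b) = b := by
  rw [← cmpApply, biprod.inr_snd]
  rfl

lemma desc_inl_apply {A B T : ModuleCat.{u} R} (p : A ⟶ T) (q : B ⟶ T) (a : A) :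
    (biprod.desc p q) ((biprod.inl : A ⟶ A ⊞ B) a) = p a := by
  rw [← cmpApply, biprod.inl_desc]

lemma desc_inr_apply {A B T : ModuleCat.{u} R} (p : A ⟶ T) (q : B ⟶ T) (b : B) :
    (biprod.desc p q) ((biprod.inr : B ⟶ A ⊞ B) b) = q b := by
  rw [← cmpApply, biprod.inr_desc]

lemma lift_fst_apply {A B T : ModuleCat.{u} R} (u : T ⟶ A) (v : T ⟶ B) (t : T) :
    (biprod.fst : A ⊞ B ⟶ A) ((biprod.lift u v) t) = u t := by
  rw [← cmpApply, biprod.lift_fst]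

lemma lift_snd_apply {A B T : ModuleCat.{u} R} (u : T ⟶ A) (v : T ⟶ B) (t : T) :
    (biprod.snd : A ⊞ B ⟶ B) ((biprod.lift u v) t) = v t := by
  rw [← cmpApply, biprod.lift_snd]

lemma biprod_ext {A B : ModuleCat.{u} R} {z w : ↑(A ⊞ B)}
    (h1 : (biprod.fst : A ⊞ B ⟶ A) z = (biprod.fst : A ⊞ B ⟶ A) w)
    (h2 : (biprod.snd : A ⊞ B ⟶ B) z = (biprod.snd : A ⊞ B ⟶ B) w) : z = w := by
  rw [biprod_decomp z, biprod_decomp w, h1, h2]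

lemma exists_preimage_of_homologyπ_eq_zero (S : ShortComplex (ModuleCat.{u} R))
    (z : ↑S.cycles) (hz : S.homologyπ z = 0) :
    ∃ x : ↑S.X₁, S.f x = S.iCycles z := by
  have h := congrArg (fun φ => (ModuleCat.Hom.hom φ) z)
    S.π_moduleCatCyclesIso_hom
  simp only [ModuleCat.hom_comp, LinearMap.comp_apply] at h
  rw [hz, map_zero] at h
  have h5 : Submodule.Quotient.mk (p := LinearMap.range S.moduleCatToCycles)
      (S.moduleCatCyclesIso.hom z) = 0 := h.symm
  have h2 : S.moduleCatCyclesIso.hom z ∈ LinearMap.range S.moduleCatToCycles :=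
    (Submodule.Quotient.mk_eq_zero _).1 h5
  obtain ⟨x, hx⟩ := h2
  refine ⟨x, ?_⟩
  have h3 : ((LinearMap.ker S.g.hom).subtype) (S.moduleCatToCycles x) = S.f x := rfl
  have h4 := congrArg (fun φ => (ModuleCat.Hom.hom φ) z) S.moduleCatCyclesIso_hom_i
  simp only [ModuleCat.hom_comp, LinearMap.comp_apply] at h4
  rw [← h3, hx]
  exact h4

/-- Package an element as a cycle. -/
noncomputable def cycMk {ι : Type} {cs : ComplexShape ι}
    (K : HomologicalComplex (ModuleCat.{u} R) cs) (n j : ι) (hj : cs.next n = j)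
    (x : ↑(K.X n)) (hx : K.d n j x = 0) : ↑(K.cycles n) :=
  (K.sc n).moduleCatCyclesIso.inv ⟨x, by subst hj; exact hx⟩

lemma i_cycMk {ι : Type} {cs : ComplexShape ι}
    (K : HomologicalComplex (ModuleCat.{u} R) cs) (n j : ι) (hj : cs.next n = j)
    (x : ↑(K.X n)) (hx : K.d n j x = 0) :
    K.iCycles n (cycMk K n j hj x hx) = x := by
  subst hj
  exact (K.sc n).moduleCatCyclesIso_inv_iCycles_apply _

lemma exists_boundary {ι : Type} {cs : ComplexShape ι}
    (K : HomologicalComplex (ModuleCat.{u} R) cs) (n p : ι) (hp : cs.prev n = p)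
    (z : ↑(K.cycles n)) (hz : K.homologyπ n z = 0) :
    ∃ b : ↑(K.X p), K.d p n b = K.iCycles n z := by
  subst hp
  exact exists_preimage_of_homologyπ_eq_zero (K.sc n) z hz


section PB

variable (X Y : ChainComplex (ModuleCat.{u} R) ℤ) (f : X ⟶ Y)

/-- Explicit model for the pullback of `coneProj Y` along `f`. -/
noncomputable def PB : ChainComplex (ModuleCat.{u} R) ℤ where
  X i := X.X i ⊞ Y.X (i + 1)
  d i j :=
    if hij : j + 1 = i then
      biprod.desc (biprod.lift (X.d i j) (f.f i ≫ eqToHom (congrArg Y.X hij).symm))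
        (biprod.lift 0 (-Y.d (i + 1) (j + 1)))
    else 0
  shape := by
    intro i j hij
    simp only [ComplexShape.down_Rel] at hij
    try dsimp only
    rw [dif_neg hij]
  d_comp_d' := by
    intro i j k hij hjk
    simp only [ComplexShape.down_Rel] at hij hjk
    subst hij
    subst hjk
    try dsimp only
    rw [dif_pos rfl, dif_pos rfl]
    apply biprod.hom_ext' <;> apply biprod.hom_ext <;>
      simp [HomologicalComplex.Hom.comm]

noncomputable def pbFst : PB X Y f ⟶ X where
  f i := biprod.fst
  comm' := by
    intro i j hij
    simp only [ComplexShape.down_Rel] at hij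
    subst hij
    dsimp only [PB]
    rw [dif_pos rfl]
    apply biprod.hom_ext' <;> simp

noncomputable def pbToCone : PB X Y f ⟶ coneId Y where
  f i := biprod.map (f.f i) (𝟙 (Y.X (i + 1)))
  comm' := by
    intro i j hij
    simp only [ComplexShape.down_Rel] at hij
    subst hij
    dsimp only [PB, coneId]
    rw [dif_pos rfl, dif_pos rfl]
    apply biprod.hom_ext' <;> apply biprod.hom_ext <;>
      simp [HomologicalComplex.Hom.comm]

noncomputable def pbInr : shiftNeg Y ⟶ PB X Y f where
  f i := biprod.inr
  comm' := by
    intro i j hij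
    simp only [ComplexShape.down_Rel] at hij
    subst hij
    dsimp only [PB, shiftNeg]
    rw [dif_pos rfl]
    apply biprod.hom_ext <;> simp

lemma hcond (n : ℤ) : (pullback.fst (coneProj Y) f).f n ≫ biprod.fst =
    (pullback.snd (coneProj Y) f).f n ≫ f.f n := by
  have := congrArg (fun (φ : pullback (coneProj Y) f ⟶ Y) =>
    HomologicalComplex.Hom.f φ n) (pullback.condition (f := coneProj Y) (g := f))
  simpa [coneProj] using this

lemma pb_sq : pbToCone X Y f ≫ coneProj Y = pbFst X Y f ≫ f := by
  apply HomologicalComplex.hom_ext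
  intro n
  dsimp [pbToCone, coneProj, pbFst]
  exact biprod.map_fst _ _

/-- The comparison morphism to the abstract pullback. -/
noncomputable def uPB : PB X Y f ⟶ pullback (coneProj Y) f :=
  pullback.lift (pbToCone X Y f) (pbFst X Y f) (pb_sq X Y f)

noncomputable def vPB : pullback (coneProj Y) f ⟶ PB X Y f where
  f i := biprod.lift ((pullback.snd (coneProj Y) f).f i)
    ((pullback.fst (coneProj Y) f).f i ≫ biprod.snd)
  comm' := by
    intro i j hij
    simp only [ComplexShape.down_Rel] at hij
    subst hij
    have hc := hcond X Y f (j + 1)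
    dsimp only [PB]
    rw [dif_pos rfl]
    apply biprod.hom_ext
    · have hsnd := (pullback.snd (coneProj Y) f).comm (j + 1) j
      simp only [Category.assoc]
      simp [hsnd]
    · have hfst := (pullback.fst (coneProj Y) f).comm (j + 1) j
      dsimp only [coneId] at hfst
      rw [dif_pos rfl] at hfst
      simp only [Category.assoc, biprod.lift_snd]
      erw [← reassoc_of% hfst]
      simp only [biprod.lift_desc, Category.assoc, biprod.lift_snd, biprod.desc_eq,
        Preadditive.comp_add, Preadditive.comp_neg, Category.comp_id, eqToHom_refl,
        Preadditive.neg_comp, ← Category.assoc, hc]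
      simp only [biprod.lift_fst, biprod.lift_snd, Preadditive.add_comp, Category.assoc,
        Category.comp_id]
      erw [hc, Category.assoc]
      rfl

lemma u_v : uPB X Y f ≫ vPB X Y f = 𝟙 _ := by
  apply HomologicalComplex.hom_ext
  intro n
  have h1 := congrArg (fun (φ : PB X Y f ⟶ X) => HomologicalComplex.Hom.f φ n)
    (pullback.lift_snd (pbToCone X Y f) (pbFst X Y f) (pb_sq X Y f))
  have h2 := congrArg (fun (φ : PB X Y f ⟶ coneId Y) => HomologicalComplex.Hom.f φ n)
    (pullback.lift_fst (pbToCone X Y f) (pbFst X Y f) (pb_sq X Y f))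
  simp only [HomologicalComplex.comp_f] at h1 h2
  dsimp only [uPB, vPB, HomologicalComplex.comp_f, HomologicalComplex.id_f]
  apply biprod.hom_ext
  · erw [Category.assoc, biprod.lift_fst, h1, Category.id_comp]
    rfl
  · erw [Category.assoc, biprod.lift_snd, ← Category.assoc, h2, Category.id_comp]
    dsimp only [pbToCone]
    erw [biprod.map_snd, Category.comp_id]

lemma v_u : vPB X Y f ≫ uPB X Y f = 𝟙 _ := by
  apply pullback.hom_ext
  · rw [Category.assoc]
    dsimp only [uPB]
    rw [pullback.lift_fst, Category.id_comp]
    apply HomologicalComplex.hom_ext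
    intro n
    dsimp only [vPB, pbToCone, HomologicalComplex.comp_f]
    apply biprod.hom_ext
    · erw [Category.assoc, biprod.map_fst, ← Category.assoc, biprod.lift_fst, hcond X Y f n]
    · erw [Category.assoc, biprod.map_snd, ← Category.assoc, biprod.lift_snd, Category.comp_id]
  · rw [Category.assoc]
    dsimp only [uPB]
    rw [pullback.lift_snd, Category.id_comp]
    apply HomologicalComplex.hom_ext
    intro n
    dsimp only [vPB, pbFst, HomologicalComplex.comp_f]
    erw [biprod.lift_fst]

end PB

end Stmt13Aux

/-- If `f : X ⟶ Y` is a ghost morphism of chain complexes of left `R`-modules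
(`Hₙ(f) = 0` for all `n`), then the pullback of the short exact sequence
`0 → Σ⁻¹Y → cone(1_{Σ⁻¹Y}) → Y → 0` along `f` is Cartan–Eilenberg exact, i.e. it induces
short exact sequences on cycles in every degree. -/
theorem stmt13 {R : Type u} [Ring R]
    (X Y : ChainComplex (ModuleCat.{u} R) ℤ) (f : X ⟶ Y)
    (hf : ∀ n : ℤ, HomologicalComplex.homologyMap f n = 0)
    (k : shiftNeg Y ⟶ pullback (coneProj Y) f)
    (hk₁ : k ≫ pullback.fst (coneProj Y) f = coneInl Y)
    (hk₂ : k ≫ pullback.snd (coneProj Y) f = 0) :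
    ∀ n : ℤ,
      (ShortComplex.mk (HomologicalComplex.cyclesMap k n)
        (HomologicalComplex.cyclesMap (pullback.snd (coneProj Y) f) n)
        (by rw [← HomologicalComplex.cyclesMap_comp, hk₂,
          HomologicalComplex.cyclesMap_zero])).ShortExact := by
  open Stmt13Aux in
  intro n
  -- identify `k` and `pullback.snd` through the explicit model `PB`
  have hkfst : pbInr X Y f ≫ pbToCone X Y f = coneInl Y := by
    apply HomologicalComplex.hom_ext
    intro m
    dsimp only [pbInr, pbToCone, coneInl, PB, shiftNeg, coneId, HomologicalComplex.comp_f]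
    rw [biprod.inr_map, Category.id_comp]
  have hzero : pbInr X Y f ≫ pbFst X Y f = 0 := by
    apply HomologicalComplex.hom_ext
    intro m
    dsimp only [pbInr, pbFst, PB, shiftNeg, HomologicalComplex.comp_f]
    simp
    rfl
  have hk' : k = pbInr X Y f ≫ uPB X Y f := by
    apply pullback.hom_ext
    · rw [hk₁, Category.assoc]
      dsimp only [uPB]
      rw [pullback.lift_fst, hkfst]
    · rw [hk₂, Category.assoc]
      dsimp only [uPB]
      rw [pullback.lift_snd, hzero]
  have hsnd' : uPB X Y f ≫ pullback.snd (coneProj Y) f = pbFst X Y f := by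
    dsimp only [uPB]; rw [pullback.lift_snd]
  have hPBd : ∀ j : ℤ, (PB X Y f).d (j + 1) j =
      biprod.desc (biprod.lift (X.d (j + 1) j) (f.f (j + 1)))
        (biprod.lift 0 (-Y.d (j + 1 + 1) (j + 1))) := by
    intro j
    dsimp only [PB]
    rw [dif_pos rfl]
    simp only [eqToHom_refl, Category.comp_id]
  -- mono
  have hmono : Mono (HomologicalComplex.cyclesMap (pbInr X Y f) n) := by
    haveI : Mono ((pbInr X Y f).f n) := by
      dsimp only [pbInr]; exact (inferInstance : Mono (biprod.inr : Y.X (n + 1) ⟶ X.X n ⊞ Y.X (n + 1)))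
    haveI : Mono (HomologicalComplex.cyclesMap (pbInr X Y f) n ≫ (PB X Y f).iCycles n) := by
      rw [HomologicalComplex.cyclesMap_i]
      exact mono_comp _ _
    exact mono_of_mono _ ((PB X Y f).iCycles n)
  -- epi
  have hepi : Epi (HomologicalComplex.cyclesMap (pbFst X Y f) n) := by
    obtain ⟨j, rfl⟩ : ∃ j, n = j + 1 := ⟨n - 1, by ring⟩
    rw [ModuleCat.epi_iff_surjective]
    intro c
    set x := X.iCycles (j + 1) c with hxdef
    have hdx : X.d (j + 1) j x = 0 := by
      rw [hxdef, ← cmpApply, X.iCycles_d]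
      rfl
    have hπ : Y.homologyπ (j + 1) (HomologicalComplex.cyclesMap f (j + 1) c) = 0 := by
      have h := congrArg (fun (φ : X.cycles (j + 1) ⟶ Y.homology (j + 1)) => φ c)
        (HomologicalComplex.homologyπ_naturality f (j + 1))
      simp only [cmpApply] at h
      rw [hf (j + 1), zeroApply] at h
      exact h.symm
    obtain ⟨b, hb⟩ := exists_boundary Y (j + 1) (j + 1 + 1)
      (ComplexShape.prev_eq' _ (by simp)) (HomologicalComplex.cyclesMap f (j + 1) c) hπ
    have hb' : Y.d (j + 1 + 1) (j + 1) b = f.f (j + 1) x := by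
      rw [hb, hxdef, ← cmpApply, HomologicalComplex.cyclesMap_i, cmpApply]
    set q : ↑(X.X (j + 1) ⊞ Y.X (j + 1 + 1)) :=
      (biprod.inl : X.X (j + 1) ⟶ _) x + (biprod.inr : Y.X (j + 1 + 1) ⟶ _) b with hq
    have hdq0 : (biprod.desc (biprod.lift (X.d (j + 1) j) (f.f (j + 1)))
        (biprod.lift 0 (-Y.d (j + 1 + 1) (j + 1)))) q = 0 := by
      rw [hq, map_add, desc_inl_apply, desc_inr_apply]
      apply biprod_ext
      · rw [map_add, lift_fst_apply, lift_fst_apply, hdx, zeroApply, add_zero, map_zero]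
      · rw [map_add, lift_snd_apply, lift_snd_apply, negApply, hb', map_zero]
        exact add_neg_cancel _
    have hdq : (PB X Y f).d (j + 1) j q = 0 := by
      rw [hPBd j]; exact hdq0
    refine ⟨cycMk (PB X Y f) (j + 1) j (ComplexShape.next_eq' _ (by simp)) q hdq, ?_⟩
    apply (ModuleCat.mono_iff_injective (X.iCycles (j + 1))).1 inferInstance
    have h := congrArg (fun (φ : (PB X Y f).cycles (j + 1) ⟶ X.X (j + 1)) =>
        φ (cycMk (PB X Y f) (j + 1) j (ComplexShape.next_eq' _ (by simp)) q hdq))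
      (HomologicalComplex.cyclesMap_i (pbFst X Y f) (j + 1))
    simp only [cmpApply] at h
    erw [h, i_cycMk]
    show (biprod.fst : X.X (j + 1) ⊞ Y.X (j + 1 + 1) ⟶ X.X (j + 1)) q = X.iCycles (j + 1) c
    rw [hq, map_add, inl_fst_apply, inr_fst_apply, add_zero, hxdef]
  -- exactness
  have hexact : (ShortComplex.mk (HomologicalComplex.cyclesMap (pbInr X Y f) n)
      (HomologicalComplex.cyclesMap (pbFst X Y f) n)
      (by rw [← HomologicalComplex.cyclesMap_comp, hzero,
        HomologicalComplex.cyclesMap_zero])).Exact := by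
    rw [ShortComplex.moduleCat_exact_iff]
    obtain ⟨j, rfl⟩ : ∃ j, n = j + 1 := ⟨n - 1, by ring⟩
    intro q' hq'
    set z : ↑(X.X (j + 1) ⊞ Y.X (j + 1 + 1)) := (PB X Y f).iCycles (j + 1) q' with hzdef
    have hfz : (biprod.fst : X.X (j + 1) ⊞ Y.X (j + 1 + 1) ⟶ X.X (j + 1)) z = 0 := by
      have h := congrArg (fun (φ : (PB X Y f).cycles (j + 1) ⟶ X.X (j + 1)) => φ q')
        (HomologicalComplex.cyclesMap_i (pbFst X Y f) (j + 1))
      simp only [cmpApply] at h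
      have h' : (biprod.fst : X.X (j + 1) ⊞ Y.X (j + 1 + 1) ⟶ X.X (j + 1)) z
          = X.iCycles (j + 1) (HomologicalComplex.cyclesMap (pbFst X Y f) (j + 1) q') := h.symm
      rw [h', hq', map_zero]
    set b := (biprod.snd : X.X (j + 1) ⊞ Y.X (j + 1 + 1) ⟶ Y.X (j + 1 + 1)) z with hbdef
    have hzb : z = (biprod.inr : Y.X (j + 1 + 1) ⟶ X.X (j + 1) ⊞ Y.X (j + 1 + 1)) b := by
      rw [biprod_decomp z, hfz, map_zero, zero_add, hbdef]
    have hdz : (PB X Y f).d (j + 1) j ((PB X Y f).iCycles (j + 1) q') = 0 := by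
      rw [← cmpApply, HomologicalComplex.iCycles_d]
      rfl
    rw [hPBd j] at hdz
    have hdz2 : (biprod.desc (biprod.lift (X.d (j + 1) j) (f.f (j + 1)))
        (biprod.lift 0 (-Y.d (j + 1 + 1) (j + 1)))) z = 0 := hdz
    rw [hzb, desc_inr_apply] at hdz2
    have hdb : Y.d (j + 1 + 1) (j + 1) b = 0 := by
      have h2 := congrArg (biprod.snd : X.X j ⊞ Y.X (j + 1) ⟶ Y.X (j + 1)) hdz2
      rw [lift_snd_apply, map_zero, negApply, neg_eq_zero] at h2
      exact h2
    have hsd : (shiftNeg Y).d (j + 1) j b = 0 := by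
      show (-Y.d (j + 1 + 1) (j + 1)) b = 0
      rw [negApply, hdb, neg_zero]
    refine ⟨cycMk (shiftNeg Y) (j + 1) j (ComplexShape.next_eq' _ (by simp)) b hsd, ?_⟩
    apply (ModuleCat.mono_iff_injective ((PB X Y f).iCycles (j + 1))).1 inferInstance
    have h := congrArg (fun (φ : (shiftNeg Y).cycles (j + 1) ⟶ (PB X Y f).X (j + 1)) =>
        φ (cycMk (shiftNeg Y) (j + 1) j (ComplexShape.next_eq' _ (by simp)) b hsd))
      (HomologicalComplex.cyclesMap_i (pbInr X Y f) (j + 1))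
    simp only [cmpApply] at h
    erw [h, i_cycMk]
    show (biprod.inr : Y.X (j + 1 + 1) ⟶ X.X (j + 1) ⊞ Y.X (j + 1 + 1)) b
      = (PB X Y f).iCycles (j + 1) q'
    rw [← hzb]
  have hS' : (ShortComplex.mk (HomologicalComplex.cyclesMap (pbInr X Y f) n)
      (HomologicalComplex.cyclesMap (pbFst X Y f) n)
      (by rw [← HomologicalComplex.cyclesMap_comp, hzero,
        HomologicalComplex.cyclesMap_zero])).ShortExact :=
    { exact := hexact, mono_f := hmono, epi_g := hepi }
  refine ShortComplex.shortExact_of_iso ?_ hS'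
  refine ShortComplex.isoMk (Iso.refl _)
    (Iso.mk (HomologicalComplex.cyclesMap (uPB X Y f) n)
      (HomologicalComplex.cyclesMap (vPB X Y f) n) ?_ ?_) (Iso.refl _) ?_ ?_
  · show HomologicalComplex.cyclesMap (uPB X Y f) n ≫ HomologicalComplex.cyclesMap (vPB X Y f) n
      = 𝟙 ((PB X Y f).cycles n)
    rw [← HomologicalComplex.cyclesMap_comp, u_v, HomologicalComplex.cyclesMap_id]
  · show HomologicalComplex.cyclesMap (vPB X Y f) n ≫ HomologicalComplex.cyclesMap (uPB X Y f) n
      = 𝟙 ((pullback (coneProj Y) f).cycles n)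
    rw [← HomologicalComplex.cyclesMap_comp, v_u, HomologicalComplex.cyclesMap_id]
  · show 𝟙 _ ≫ HomologicalComplex.cyclesMap k n
      = HomologicalComplex.cyclesMap (pbInr X Y f) n ≫ HomologicalComplex.cyclesMap (uPB X Y f) n
    rw [Category.id_comp, hk', HomologicalComplex.cyclesMap_comp]
  · show HomologicalComplex.cyclesMap (uPB X Y f) n
        ≫ HomologicalComplex.cyclesMap (pullback.snd (coneProj Y) f) n
      = HomologicalComplex.cyclesMap (pbFst X Y f) n ≫ 𝟙 _
    rw [Category.comp_id, ← HomologicalComplex.cyclesMap_comp, hsnd']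
end

section
/- Let R be a ring such that every chain-homotopy class of chain maps between complexes of left R-modules that induces zero on all homology groups is zero (i.e., the ghost ideal in the homotopy category K(R) vanishes). Then every left R-module is projective, i.e., R is semisimple. -/
open CategoryTheory Limits

universe u

noncomputable section Stmt14Aux

variable {R : Type u} [Ring R]

namespace Stmt14Aux

variable (A B : ModuleCat.{u} R) (φ : A ⟶ B)

/-- The chain complex with `A` in degree 1, `B` in degree 0, differential `φ`. -/
def twoComplex : ChainComplex (ModuleCat.{u} R) ℤ where
  X n := if n = 1 then A else if n = 0 then B else ModuleCat.of R PUnit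
  d i j :=
    if h : i = 1 ∧ j = 0 then
      eqToHom (by rw [h.1]; simp) ≫ φ ≫ eqToHom (by rw [h.2]; simp)
    else 0
  shape i j hij := by
    rw [dif_neg]
    rintro ⟨rfl, rfl⟩
    exact hij rfl
  d_comp_d' i j k hij hjk := by
    by_cases h : i = 1 ∧ j = 0
    · rw [dif_neg (by omega : ¬ (j = 1 ∧ k = 0)), comp_zero]
    · rw [dif_neg h, zero_comp]

lemma twoComplex_X1 : (twoComplex A B φ).X 1 = A := by
  show (if (1 : ℤ) = 1 then A else if (1 : ℤ) = 0 then B else ModuleCat.of R PUnit) = A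
  rw [if_pos rfl]

lemma twoComplex_X0 : (twoComplex A B φ).X 0 = B := by
  show (if (0 : ℤ) = 1 then A else if (0 : ℤ) = 0 then B else ModuleCat.of R PUnit) = B
  norm_num

lemma twoComplex_d10 :
    (twoComplex A B φ).d 1 0 =
      eqToHom (twoComplex_X1 A B φ) ≫ φ ≫ eqToHom (twoComplex_X0 A B φ).symm := by
  dsimp only [twoComplex]
  rw [dif_pos ⟨rfl, rfl⟩]

lemma twoComplex_d21 : (twoComplex A B φ).d 2 1 = 0 := by
  dsimp only [twoComplex]
  rw [dif_neg (by omega : ¬((2:ℤ) = 1 ∧ (1:ℤ) = 0))]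
  rfl

/-- The complex with `A` concentrated in degree 1. -/
def singleA : ChainComplex (ModuleCat.{u} R) ℤ :=
  (HomologicalComplex.single (ModuleCat.{u} R) (ComplexShape.down ℤ) 1).obj A

/-- The ghost map from `twoComplex` to the single complex: identity in degree 1. -/
def toSingle : twoComplex A B φ ⟶ singleA A :=
  HomologicalComplex.mkHomToSingle (eqToHom (twoComplex_X1 A B φ))
    (fun i hi => by
      obtain rfl : i = 2 := by simpa using hi.symm
      rw [twoComplex_d21, zero_comp])

lemma toSingle_f1 :
    (toSingle A B φ).f 1 = eqToHom (twoComplex_X1 A B φ) ≫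
      (HomologicalComplex.singleObjXSelf (ComplexShape.down ℤ) 1 A).inv :=
  HomologicalComplex.mkHomToSingle_f _ _

lemma toSingle_ghost [Mono φ] (n : ℤ) :
    HomologicalComplex.homologyMap (toSingle A B φ) n = 0 := by
  by_cases hn : n = 1
  · subst hn
    have hz : IsZero ((twoComplex A B φ).homology 1) := by
      rw [← HomologicalComplex.exactAt_iff_isZero_homology]
      rw [HomologicalComplex.exactAt_iff' (twoComplex A B φ) 2 1 0
        (ComplexShape.prev_eq' _ (by simp)) (ComplexShape.next_eq' _ (by simp))]
      rw [ShortComplex.exact_iff_mono _ (twoComplex_d21 A B φ)]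
      show Mono ((twoComplex A B φ).d 1 0)
      rw [twoComplex_d10]
      infer_instance
    exact hz.eq_of_src _ _
  · exact (HomologicalComplex.isZero_single_obj_homology _ 1 A n hn).eq_of_tgt _ _

/-- A null-homotopy of `toSingle` yields a retraction of `φ`. -/
lemma retraction_of_homotopy (H : Homotopy (toSingle A B φ) 0) :
    ∃ r : B ⟶ A, φ ≫ r = 𝟙 A := by
  have hc := H.comm 1
  rw [dNext_eq H.hom (show (ComplexShape.down ℤ).Rel 1 0 by simp),
    prevD_eq H.hom (show (ComplexShape.down ℤ).Rel 2 1 by simp)] at hc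
  have hd : (singleA A (R := R)).d 2 1 = 0 :=
    HomologicalComplex.single_obj_d _ _ _ _ _
  rw [hd, comp_zero, add_zero, toSingle_f1, twoComplex_d10] at hc
  simp only [HomologicalComplex.zero_f_apply, add_zero, Category.assoc] at hc
  have hc' := (cancel_epi (eqToHom (twoComplex_X1 A B φ))).mp hc
  set iso := HomologicalComplex.singleObjXSelf (ComplexShape.down ℤ) 1 A with hiso
  refine ⟨eqToHom (twoComplex_X0 A B φ).symm ≫ H.hom 0 1 ≫ iso.hom, ?_⟩
  calc φ ≫ eqToHom (twoComplex_X0 A B φ).symm ≫ H.hom 0 1 ≫ iso.hom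
      = (φ ≫ eqToHom (twoComplex_X0 A B φ).symm ≫ H.hom 0 1) ≫ iso.hom := by
        rfl
    _ = iso.inv ≫ iso.hom := by rw [← hc']; rfl
    _ = 𝟙 A := iso.inv_hom_id

end Stmt14Aux

end Stmt14Aux

/-- If every ghost chain map between chain complexes of left `R`-modules (i.e. every
chain map inducing zero on all homology groups) is null-homotopic — that is, the ghost
ideal in the homotopy category `K(R)` vanishes — then every left `R`-module is
projective, i.e. `R` is semisimple. -/
theorem stmt14 {R : Type u} [Ring R]
    (h : ∀ (X Y : ChainComplex (ModuleCat.{u} R) ℤ) (f : X ⟶ Y),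
      (∀ n : ℤ, HomologicalComplex.homologyMap f n = 0) → Nonempty (Homotopy f 0)) :
    (∀ (M : Type u) [AddCommGroup M] [Module R M], Module.Projective R M) ∧
      IsSemisimpleRing R := by
  have proj : ∀ (M : Type u) [AddCommGroup M] [Module R M], Module.Projective R M := by
    intro M _ _
    set π : (M →₀ R) →ₗ[R] M := Finsupp.linearCombination R (id : M → M) with hπ
    set K := LinearMap.ker π with hK
    set ι : K →ₗ[R] (M →₀ R) := K.subtype with hι
    set A : ModuleCat.{u} R := ModuleCat.of R K with hA
    set B : ModuleCat.{u} R := ModuleCat.of R (M →₀ R) with hB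
    have hmono : Mono (ModuleCat.ofHom ι : A ⟶ B) :=
      (ModuleCat.mono_iff_injective (ModuleCat.ofHom ι : A ⟶ B)).mpr
        (Submodule.injective_subtype K)
    obtain ⟨H⟩ := h _ _ (Stmt14Aux.toSingle A B (ModuleCat.ofHom ι)) (Stmt14Aux.toSingle_ghost A B (ModuleCat.ofHom ι))
    obtain ⟨r, hr⟩ := Stmt14Aux.retraction_of_homotopy A B (ModuleCat.ofHom ι) H
    -- `r : B ⟶ A` is a retraction of `ι` as a linear map
    have hretr : r.hom ∘ₗ ι = LinearMap.id := congrArg ModuleCat.Hom.hom hr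
    have hexact : Function.Exact ι π := LinearMap.exact_iff.mpr (Submodule.range_subtype _).symm
    have hsurj : Function.Surjective π :=
      Finsupp.linearCombination_surjective R Function.surjective_id
    have hinj : Function.Injective ι := Submodule.injective_subtype K
    have h21 : (∃ l, l ∘ₗ ι = LinearMap.id) → (∃ l, π ∘ₗ l = LinearMap.id) :=
      ((hexact.split_tfae (M := K) hinj hsurj).out 1 0 rfl rfl).mp
    obtain ⟨l, hl⟩ := h21 ⟨r.hom, hretr⟩
    exact Module.Projective.of_split l π hl
  refine ⟨proj, ?_⟩
  refine (isSemisimpleModule_iff R R).mpr ⟨?_⟩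
  intro N
  have : Module.Projective R (R ⧸ N) := proj _
  obtain ⟨σ, hσ⟩ := Module.projective_lifting_property N.mkQ LinearMap.id
    (Submodule.mkQ_surjective N)
  have hmem : ∀ x : R, x - σ (N.mkQ x) ∈ N := by
    intro x
    rw [← Submodule.Quotient.mk_eq_zero]
    have : N.mkQ (x - σ (N.mkQ x)) = 0 := by
      rw [map_sub]
      have := LinearMap.congr_fun hσ (N.mkQ x)
      simp only [LinearMap.coe_comp, Function.comp_apply, LinearMap.id_apply] at this
      rw [this, sub_self]
    simpa using this
  set f : R →ₗ[R] N :=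
    LinearMap.codRestrict N (LinearMap.id - σ ∘ₗ N.mkQ) hmem with hf
  have hproj : ∀ x : N, f x = x := by
    intro x
    apply Subtype.ext
    simp only [hf, LinearMap.codRestrict_apply, LinearMap.sub_apply, LinearMap.id_apply,
      LinearMap.coe_comp, Function.comp_apply]
    have : N.mkQ (x : R) = 0 := by
      rw [Submodule.mkQ_apply, Submodule.Quotient.mk_eq_zero]; exact x.2
    rw [this, map_zero, sub_zero]
  exact ⟨LinearMap.ker f, LinearMap.isCompl_of_proj hproj⟩
end

section
/- Let A be a cocomplete abelian category with exact coproducts, S a set of objects of A, and A an object of A. Let S = ⨁_{T ∈ S} T, let I = Ext¹(S, A), and for each i ∈ I choose a representing short exact sequence 0 → A → B_i → S → 0. Form the pushout of the coproduct sequence 0 → A^{(I)} → ⨁_{i∈I} B_i → S^{(I)} → 0 along the codiagonal A^{(I)} → A, obtaining 0 → A →^{j} G → S^{(I)} → 0. Then j is an S-ghost: Ext¹(T, j) = 0 for every T ∈ S. -/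
open CategoryTheory Limits CategoryTheory.Abelian

universe v u

/-- The Eklof–Trlifaj construction of a ghost preenvelope: let `A` be a cocomplete abelian
category with exact coproducts (AB4), `𝒮` a set of objects, `A` an object, `S = ⨁_{T ∈ 𝒮} T`
and `I = Ext¹(S, A)`.  Choose for each `i ∈ I` a representing short exact sequence
`0 → A → B i → S → 0` (i.e. with extension class `i`), and form the pushout of the
coproduct sequence `0 → A^{(I)} → ⨁ᵢ B i → S^{(I)} → 0` along the codiagonal
`A^{(I)} → A`; the resulting inflation `j = pushout.inl : A ⟶ G` is an `𝒮`-ghost: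
`Ext¹(T, j) = 0` for every `T ∈ 𝒮`. -/
theorem stmt19 {C : Type u} [Category.{v} C] [Abelian C] [HasColimits C]
    [AB4 C] [HasExt.{v} C]
    {𝒮 : Type v} (obj : 𝒮 → C) (A : C)
    (B : Ext.{v} (∐ obj) A 1 → C)
    (incl : ∀ i, A ⟶ B i) (proj : ∀ i, B i ⟶ ∐ obj)
    (w : ∀ i, incl i ≫ proj i = 0)
    (hses : ∀ i, (ShortComplex.mk (incl i) (proj i) (w i)).ShortExact)
    (hrep : ∀ i, (hses i).extClass = i) :
    ∀ (t : 𝒮) (e : Ext.{v} (obj t) A 1),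
      e.comp (Ext.mk₀ (pushout.inl
        (Limits.Sigma.desc (f := fun _ : Ext.{v} (∐ obj) A 1 => A) (fun _ => 𝟙 A))
        (Limits.Sigma.map (f := fun _ : Ext.{v} (∐ obj) A 1 => A) (g := B) incl))) (add_zero 1) = 0 := by
  intro t e
  classical
  -- a retraction of the coproduct inclusion
  set r : (∐ obj) ⟶ obj t :=
    Sigma.desc (fun s => if h : s = t then eqToHom (by rw [h]) else 0) with hr
  have hretr : Sigma.ι obj t ≫ r = 𝟙 (obj t) := by
    simp [hr]
  -- the element of `Ext¹(∐ obj, A)` restricting to `e`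
  set i₀ : Ext.{v} (∐ obj) A 1 := (Ext.mk₀ r).comp e (zero_add 1) with hi₀
  have he : (Ext.mk₀ (Sigma.ι obj t)).comp i₀ (zero_add 1) = e := by
    rw [hi₀, Ext.mk₀_comp_mk₀_assoc, hretr, Ext.mk₀_id_comp]
  set codiag : (∐ fun _ : Ext.{v} (∐ obj) A 1 => A) ⟶ A :=
    Limits.Sigma.desc (f := fun _ : Ext.{v} (∐ obj) A 1 => A) (fun _ => 𝟙 A) with hcodiag
  set m : (∐ fun _ : Ext.{v} (∐ obj) A 1 => A) ⟶ ∐ B :=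
    Limits.Sigma.map (f := fun _ : Ext.{v} (∐ obj) A 1 => A) (g := B) incl with hm
  -- the key factorization of `j = pushout.inl` through `incl i₀`
  have hj : pushout.inl codiag m =
      incl i₀ ≫ (Sigma.ι B i₀ ≫ pushout.inr codiag m) := by
    have h1 : Sigma.ι (fun _ : Ext.{v} (∐ obj) A 1 => A) i₀ ≫ codiag = 𝟙 A := by
      simp [hcodiag]
    have h2 : Sigma.ι (fun _ : Ext.{v} (∐ obj) A 1 => A) i₀ ≫ m =
        incl i₀ ≫ Sigma.ι B i₀ := by
      simp [hm]
    calc pushout.inl codiag m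
        = Sigma.ι (fun _ : Ext.{v} (∐ obj) A 1 => A) i₀ ≫ codiag ≫ pushout.inl codiag m := by
          rw [← Category.assoc, h1, Category.id_comp]
      _ = Sigma.ι (fun _ : Ext.{v} (∐ obj) A 1 => A) i₀ ≫ m ≫ pushout.inr codiag m := by
          rw [pushout.condition]
      _ = incl i₀ ≫ (Sigma.ι B i₀ ≫ pushout.inr codiag m) := by
          rw [← Category.assoc, h2, Category.assoc]
  have hkill : ∀ i, (Ext.comp i (Ext.mk₀ (incl i)) (add_zero 1)) = 0 := by
    intro i
    have h := (hses i).extClass_comp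
    rwa [hrep i] at h
  have key : i₀.comp (Ext.mk₀ (pushout.inl codiag m)) (add_zero 1) = 0 := by
    rw [hj, ← Ext.mk₀_comp_mk₀ (incl i₀) (Sigma.ι B i₀ ≫ pushout.inr codiag m),
      ← Ext.comp_assoc_of_third_deg_zero i₀ (Ext.mk₀ (incl i₀))
        (Ext.mk₀ (Sigma.ι B i₀ ≫ pushout.inr codiag m)) (add_zero 1),
      hkill i₀, Ext.zero_comp]
  rw [← he, Ext.comp_assoc_of_third_deg_zero, key, Ext.comp_zero]
end
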